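/- arXiv:1205.3688 — 4 statements merged into one kernel-verified Lean document; each statement's English description precedes it below -/
import Mathlib

section
/- As √(2n+l)/(l+2) → +∞, one has λ_{2,B}(n,l) ~ (2n+l)^s · I, where I = ∫₀^{+∞} θ^{-2s-1}(1 − e^{−θ²/2}) dθ. Precisely: for every ε > 0 there exists R > 0 such that for all integers n, l ≥ 0 with √(2n+l)/(l+2) ≥ R, one has |λ_{2,B}(n,l)/(2n+l)^s − I| ≤ ε. -/
open MeasureTheory Real

open Set

/-- The `l`-th Legendre polynomial via the Rodrigues formula. -/
noncomputable def legP (l : ℕ) (x : ℝ) : ℝ :=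
  (1 / (2 ^ l * Nat.factorial l)) * iteratedDeriv l (fun y : ℝ => (y ^ 2 - 1) ^ l) x

/-- The term `λ_{2,B}(n,l)` in the splitting of the Boltzmann eigenvalues. -/
noncomputable def lam2B (s : ℝ) (n l : ℕ) : ℝ :=
  ∫ θ in (0:ℝ)..(1 / ((l : ℝ) + 2)),
    θ ^ (-2 * s - 1) * (1 - legP l (Real.cos θ) * (Real.cos θ) ^ (2 * n + l))

lemma iteratedDeriv_polyeval (p : Polynomial ℝ) (n : ℕ) :
    iteratedDeriv n (fun y : ℝ => p.eval y) = fun x => (Polynomial.derivative^[n] p).eval x := by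
  induction n with
  | zero => simp
  | succ n ih =>
    rw [iteratedDeriv_succ, ih]
    funext x
    rw [Function.iterate_succ_apply']
    exact Polynomial.deriv _

lemma choose_cube_arith {l k : ℕ} (hk : k ≤ l) :
    l.choose k * l.descFactorial (l - k) * l.descFactorial k
      = l.choose k ^ 2 * l.factorial := by
  rw [Nat.descFactorial_eq_factorial_mul_choose l (l - k),
    Nat.descFactorial_eq_factorial_mul_choose l k, Nat.choose_symm hk]
  have := Nat.choose_mul_factorial_mul_factorial hk
  ring_nf
  ring_nf at this
  nlinarith [this]

lemma legP_eq_sum (l : ℕ) (x : ℝ) :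
    legP l x = ∑ k ∈ Finset.range (l + 1),
      (l.choose k : ℝ) ^ 2 * ((x - 1) / 2) ^ k * ((x + 1) / 2) ^ (l - k) := by
  have hfun : (fun y : ℝ => (y ^ 2 - 1) ^ l)
      = fun y : ℝ => (((Polynomial.X - Polynomial.C 1) ^ l
          * (Polynomial.X + Polynomial.C 1) ^ l : Polynomial ℝ)).eval y := by
    funext y
    simp [← mul_pow]
    ring_nf
  rw [legP, hfun, iteratedDeriv_polyeval, Polynomial.iterate_derivative_mul]
  simp only [Polynomial.eval_finset_sum]
  rw [Finset.mul_sum]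
  refine Finset.sum_congr rfl fun k hk => ?_
  have hkl : k ≤ l := Nat.lt_succ_iff.mp (Finset.mem_range.mp hk)
  rw [Polynomial.iterate_derivative_X_sub_pow, Polynomial.iterate_derivative_X_add_pow]
  have h1 : l - (l - k) = k := Nat.sub_sub_self hkl
  rw [h1]
  simp only [Polynomial.eval_smul, Polynomial.eval_mul, Polynomial.eval_pow,
    Polynomial.eval_sub, Polynomial.eval_add, Polynomial.eval_X, Polynomial.eval_one,
    Polynomial.eval_natCast, Polynomial.eval_C, smul_eq_mul, nsmul_eq_mul]
  have harith := choose_cube_arith hkl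
  have harith' : (l.choose k : ℝ) * (l.descFactorial (l - k) : ℝ) * (l.descFactorial k : ℝ)
      = (l.choose k : ℝ) ^ 2 * (l.factorial : ℝ) := by exact_mod_cast congrArg (Nat.cast (R := ℝ)) harith
  have h2l : (2 : ℝ) ^ l = 2 ^ k * 2 ^ (l - k) := by
    rw [← pow_add, Nat.add_sub_cancel' hkl]
  have hfac : (l.factorial : ℝ) ≠ 0 := Nat.cast_ne_zero.mpr l.factorial_ne_zero
  have h2 : (2 : ℝ) ^ l ≠ 0 := by positivity
  rw [div_pow, div_pow, h2l]
  field_simp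
  linear_combination ((x - 1) ^ k * (x + 1) ^ (l - k)) * harith'

lemma choose_le_pow_real (l k : ℕ) : (l.choose k : ℝ) ≤ (l : ℝ) ^ k := by
  have h1 : l.choose k ≤ l ^ k := by
    calc l.choose k ≤ k.factorial * l.choose k := Nat.le_mul_of_pos_left _ k.factorial_pos
    _ = l.descFactorial k := (Nat.descFactorial_eq_factorial_mul_choose l k).symm
    _ ≤ l ^ k := Nat.descFactorial_le_pow l k
  exact_mod_cast h1

set_option maxHeartbeats 1000000 in
lemma abs_one_sub_legP_cos_le (l : ℕ) {θ : ℝ} (h0 : 0 ≤ θ) (h : ((l : ℝ) + 2) * θ ≤ 1) :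
    |1 - legP l (Real.cos θ)| ≤ 2 * ((l : ℝ) + 2) ^ 2 * θ ^ 2 := by
  have hl0 : (0 : ℝ) ≤ l := Nat.cast_nonneg l
  have hθ1 : θ ≤ 1 / 2 := by nlinarith
  set σ := Real.sin (θ / 2) with hσdef
  have hσ0 : 0 ≤ σ := Real.sin_nonneg_of_nonneg_of_le_pi (by linarith)
    (by nlinarith [Real.pi_gt_three])
  have hσle : σ ≤ θ / 2 := Real.sin_le (by linarith)
  have hσsq' : σ ^ 2 ≤ θ ^ 2 / 4 := by nlinarith
  have hσsq : σ ^ 2 = 1 / 2 - Real.cos θ / 2 := by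
    rw [hσdef, Real.sin_sq_eq_half_sub, show 2 * (θ / 2) = θ by ring]
  have hcos1 : (Real.cos θ - 1) / 2 = -σ ^ 2 := by rw [hσsq]; ring
  have hcos2 : (Real.cos θ + 1) / 2 = 1 - σ ^ 2 := by rw [hσsq]; ring
  have hσ1 : σ ^ 2 ≤ 1 := by nlinarith
  have hlσ : (l : ℝ) * σ ≤ 1 / 2 := by nlinarith
  have hlσ0 : 0 ≤ (l : ℝ) * σ := by positivity
  rw [legP_eq_sum, hcos1, hcos2, Finset.sum_range_succ']
  simp only [Nat.choose_zero_right, Nat.cast_one, one_pow, pow_zero, Nat.sub_zero, one_mul]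
  have key1 : |1 - (1 - σ ^ 2) ^ l| ≤ (l : ℝ) * σ ^ 2 := by
    have hb := one_add_mul_le_pow (a := -σ ^ 2) (by nlinarith) l
    rw [show (1:ℝ) + -σ ^ 2 = 1 - σ ^ 2 by ring] at hb
    rw [abs_of_nonneg]
    · have : ((l:ℝ)) * -σ ^ 2 = -((l:ℝ) * σ ^ 2) := by ring
      linarith
    · nlinarith [pow_le_one₀ (by nlinarith : (0:ℝ) ≤ 1 - σ ^ 2) (by nlinarith : (1:ℝ) - σ ^ 2 ≤ 1) (n := l)]
  have key2 : |∑ k ∈ Finset.range l,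
      (l.choose (k + 1) : ℝ) ^ 2 * (-σ ^ 2) ^ (k + 1) * (1 - σ ^ 2) ^ (l - (k + 1))|
      ≤ 2 * ((l : ℝ) * σ) ^ 2 := by
    calc |∑ k ∈ Finset.range l,
        (l.choose (k + 1) : ℝ) ^ 2 * (-σ ^ 2) ^ (k + 1) * (1 - σ ^ 2) ^ (l - (k + 1))|
        ≤ ∑ k ∈ Finset.range l,
        |(l.choose (k + 1) : ℝ) ^ 2 * (-σ ^ 2) ^ (k + 1) * (1 - σ ^ 2) ^ (l - (k + 1))| :=
          Finset.abs_sum_le_sum_abs _ _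
    _ ≤ ∑ k ∈ Finset.range l, ((l : ℝ) * σ) ^ 2 * (1 / 4) ^ k := by
        refine Finset.sum_le_sum fun k _ => ?_
        have hC : (l.choose (k + 1) : ℝ) ≤ (l : ℝ) ^ (k + 1) := choose_le_pow_real l (k + 1)
        have hC0 : (0 : ℝ) ≤ (l.choose (k + 1) : ℝ) := Nat.cast_nonneg _
        have habs : |(l.choose (k + 1) : ℝ) ^ 2 * (-σ ^ 2) ^ (k + 1) * (1 - σ ^ 2) ^ (l - (k + 1))|
            = ((l.choose (k + 1) : ℝ) * σ ^ (k + 1)) ^ 2 * (1 - σ ^ 2) ^ (l - (k + 1)) := by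
          rw [abs_mul, abs_mul, abs_pow, abs_pow, abs_pow, abs_neg,
            abs_of_nonneg hC0, abs_of_nonneg (by positivity : (0:ℝ) ≤ σ ^ 2),
            abs_of_nonneg (by nlinarith : (0:ℝ) ≤ 1 - σ ^ 2)]
          ring
        rw [habs]
        have e1 : (l.choose (k + 1) : ℝ) * σ ^ (k + 1) ≤ ((l : ℝ) * σ) ^ (k + 1) := by
          rw [mul_pow]
          exact mul_le_mul_of_nonneg_right hC (by positivity)
        have e2 : ((l.choose (k + 1) : ℝ) * σ ^ (k + 1)) ^ 2 ≤ (((l : ℝ) * σ) ^ (k + 1)) ^ 2 :=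
          pow_le_pow_left₀ (by positivity) e1 2
        have e3 : (((l : ℝ) * σ) ^ (k + 1)) ^ 2 = ((l : ℝ) * σ) ^ 2 * (((l : ℝ) * σ) ^ 2) ^ k := by
          rw [← pow_mul, ← pow_mul]
          ring
        have e4 : (((l : ℝ) * σ) ^ 2) ^ k ≤ (1 / 4 : ℝ) ^ k :=
          pow_le_pow_left₀ (by positivity) (by nlinarith) k
        have e5 : (1 - σ ^ 2) ^ (l - (k + 1)) ≤ 1 :=
          pow_le_one₀ (by nlinarith) (by nlinarith)
        calc ((l.choose (k + 1) : ℝ) * σ ^ (k + 1)) ^ 2 * (1 - σ ^ 2) ^ (l - (k + 1))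
            ≤ ((l.choose (k + 1) : ℝ) * σ ^ (k + 1)) ^ 2 * 1 :=
              mul_le_mul_of_nonneg_left e5 (by positivity)
        _ = ((l.choose (k + 1) : ℝ) * σ ^ (k + 1)) ^ 2 := mul_one _
        _ ≤ (((l : ℝ) * σ) ^ (k + 1)) ^ 2 := e2
        _ = ((l : ℝ) * σ) ^ 2 * (((l : ℝ) * σ) ^ 2) ^ k := e3
        _ ≤ ((l : ℝ) * σ) ^ 2 * (1 / 4) ^ k := mul_le_mul_of_nonneg_left e4 (by positivity)
    _ = ((l : ℝ) * σ) ^ 2 * ∑ k ∈ Finset.range l, (1 / 4 : ℝ) ^ k := by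
        rw [Finset.mul_sum]
    _ ≤ 2 * ((l : ℝ) * σ) ^ 2 := by
        have hg : ∑ k ∈ Finset.range l, (1 / 4 : ℝ) ^ k = ((1/4 : ℝ) ^ l - 1) / ((1/4 : ℝ) - 1) :=
          geom_sum_eq (by norm_num) l
        have hp : (0:ℝ) ≤ (1/4 : ℝ) ^ l := by positivity
        have hp1 : (1/4 : ℝ) ^ l ≤ 1 := pow_le_one₀ (by norm_num) (by norm_num)
        rw [hg]
        have hsum : (((1/4:ℝ)) ^ l - 1) / ((1/4:ℝ) - 1) ≤ 2 := by
          rw [div_le_iff_of_neg (by norm_num : (1/4 : ℝ) - 1 < 0)]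
          nlinarith
        nlinarith [mul_le_mul_of_nonneg_left hsum (sq_nonneg ((l:ℝ) * σ))]
  calc |1 - (∑ k ∈ Finset.range l,
        (l.choose (k + 1) : ℝ) ^ 2 * (-σ ^ 2) ^ (k + 1) * (1 - σ ^ 2) ^ (l - (k + 1))
        + (1 - σ ^ 2) ^ l)|
      ≤ |1 - (1 - σ ^ 2) ^ l| + |∑ k ∈ Finset.range l,
        (l.choose (k + 1) : ℝ) ^ 2 * (-σ ^ 2) ^ (k + 1) * (1 - σ ^ 2) ^ (l - (k + 1))| := by
        rw [show (1 : ℝ) - (∑ k ∈ Finset.range l,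
          (l.choose (k + 1) : ℝ) ^ 2 * (-σ ^ 2) ^ (k + 1) * (1 - σ ^ 2) ^ (l - (k + 1))
          + (1 - σ ^ 2) ^ l) = (1 - (1 - σ ^ 2) ^ l) - ∑ k ∈ Finset.range l,
          (l.choose (k + 1) : ℝ) ^ 2 * (-σ ^ 2) ^ (k + 1) * (1 - σ ^ 2) ^ (l - (k + 1)) by ring]
        exact abs_sub _ _
  _ ≤ (l : ℝ) * σ ^ 2 + 2 * ((l : ℝ) * σ) ^ 2 := add_le_add key1 key2
  _ ≤ 2 * ((l : ℝ) + 2) ^ 2 * θ ^ 2 := by nlinarith [sq_nonneg θ, sq_nonneg ((l:ℝ)*θ)]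

lemma exp_neg_upper {x : ℝ} (h0 : 0 ≤ x) (h1 : x ≤ 1) :
    Real.exp (-x) ≤ 1 - x + x ^ 2 / 2 + 2 / 9 * x ^ 3 := by
  have hb := Real.exp_bound (x := -x) (by rwa [abs_neg, abs_of_nonneg h0]) (n := 3) (by norm_num)
  rw [abs_neg, abs_of_nonneg h0] at hb
  have hs : ∑ m ∈ Finset.range 3, (-x) ^ m / (m.factorial : ℝ) = 1 - x + x ^ 2 / 2 := by
    simp [Finset.sum_range_succ, Nat.factorial]
    ring
  rw [hs] at hb
  norm_num [Nat.factorial] at hb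
  have := abs_sub_le_iff.mp hb
  nlinarith [this.1, this.2]

lemma exp_neg_lower {x : ℝ} (h0 : 0 ≤ x) (h1 : x ≤ 1) :
    1 - x + x ^ 2 / 2 - 2 / 9 * x ^ 3 ≤ Real.exp (-x) := by
  have hb := Real.exp_bound (x := -x) (by rwa [abs_neg, abs_of_nonneg h0]) (n := 3) (by norm_num)
  rw [abs_neg, abs_of_nonneg h0] at hb
  have hs : ∑ m ∈ Finset.range 3, (-x) ^ m / (m.factorial : ℝ) = 1 - x + x ^ 2 / 2 := by
    simp [Finset.sum_range_succ, Nat.factorial]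
    ring
  rw [hs] at hb
  norm_num [Nat.factorial] at hb
  have := abs_sub_le_iff.mp hb
  nlinarith [this.1, this.2]

lemma cos_le_exp_neg_sq {θ : ℝ} (h0 : 0 ≤ θ) (h1 : θ ≤ 1 / 2) :
    Real.cos θ ≤ Real.exp (-θ ^ 2 / 2) := by
  have hcb := Real.cos_bound (x := θ) (by rw [abs_of_nonneg h0]; linarith)
  rw [abs_of_nonneg h0] at hcb
  have he := exp_neg_lower (x := θ ^ 2 / 2) (by positivity) (by nlinarith)
  rw [show -(θ ^ 2 / 2) = -θ ^ 2 / 2 by ring] at he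
  have := abs_sub_le_iff.mp hcb
  nlinarith [this.1, this.2, pow_le_one₀ h0 (by linarith : θ ≤ 1) (n := 2)]

lemma exp_neg_sq_sub_cos_le {θ : ℝ} (h0 : 0 ≤ θ) (h1 : θ ≤ 1 / 2) :
    Real.exp (-θ ^ 2 / 2) - Real.cos θ ≤ θ ^ 4 / 4 := by
  have hcb := Real.cos_bound (x := θ) (by rw [abs_of_nonneg h0]; linarith)
  rw [abs_of_nonneg h0] at hcb
  have he := exp_neg_upper (x := θ ^ 2 / 2) (by positivity) (by nlinarith)
  rw [show -(θ ^ 2 / 2) = -θ ^ 2 / 2 by ring] at he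
  have := abs_sub_le_iff.mp hcb
  nlinarith [this.1, this.2, pow_le_one₀ h0 (by linarith : θ ≤ 1) (n := 2)]

lemma pow_sub_pow_le_succ {a b : ℝ} (hb : 0 ≤ b) (hba : b ≤ a) :
    ∀ N : ℕ, a ^ (N + 1) - b ^ (N + 1) ≤ (N + 1 : ℝ) * a ^ N * (a - b) := by
  intro N
  induction N with
  | zero => simp
  | succ N ih =>
    have ha0 : 0 ≤ a := le_trans hb hba
    have hpow : b ^ (N + 1) ≤ a ^ (N + 1) := pow_le_pow_left₀ hb hba _
    have key : a ^ (N + 2) - b ^ (N + 2)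
        = a * (a ^ (N + 1) - b ^ (N + 1)) + (a - b) * b ^ (N + 1) := by ring
    rw [key]
    have h1 : a * (a ^ (N + 1) - b ^ (N + 1)) ≤ a * ((N + 1 : ℝ) * a ^ N * (a - b)) :=
      mul_le_mul_of_nonneg_left ih ha0
    have h2 : (a - b) * b ^ (N + 1) ≤ (a - b) * a ^ (N + 1) :=
      mul_le_mul_of_nonneg_left hpow (by linarith)
    have h3 : a * ((N + 1 : ℝ) * a ^ N * (a - b)) + (a - b) * a ^ (N + 1)
        = (N + 2 : ℝ) * a ^ (N + 1) * (a - b) := by ring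
    calc a * (a ^ (N + 1) - b ^ (N + 1)) + (a - b) * b ^ (N + 1)
        ≤ a * ((N + 1 : ℝ) * a ^ N * (a - b)) + (a - b) * a ^ (N + 1) := by linarith
    _ = (N + 2 : ℝ) * a ^ (N + 1) * (a - b) := h3
    _ = (↑(N + 1) + 1) * a ^ (N + 1) * (a - b) := by push_cast; ring

lemma key_pointwise (l N : ℕ) (hN : 1 ≤ N) {θ : ℝ} (h0 : 0 ≤ θ)
    (h : ((l : ℝ) + 2) * θ ≤ 1) :
    |Real.exp (-(N : ℝ) * θ ^ 2 / 2) - legP l (Real.cos θ) * Real.cos θ ^ N|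
      ≤ ((N : ℝ) * θ ^ 4 / 2 + 2 * ((l : ℝ) + 2) ^ 2 * θ ^ 2)
        * Real.exp (-(N : ℝ) * θ ^ 2 / 2) := by
  have hl0 : (0 : ℝ) ≤ l := Nat.cast_nonneg l
  have hθ1 : θ ≤ 1 / 2 := by nlinarith
  set a := Real.exp (-θ ^ 2 / 2) with ha
  set c := Real.cos θ with hc
  have hc0 : 0 ≤ c := Real.cos_nonneg_of_mem_Icc
    ⟨by nlinarith [Real.pi_gt_three], by nlinarith [Real.pi_gt_three]⟩
  have hca : c ≤ a := cos_le_exp_neg_sq h0 hθ1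
  have ha0 : 0 < a := Real.exp_pos _
  have hE : Real.exp (-(N : ℝ) * θ ^ 2 / 2) = a ^ N := by
    rw [ha, ← Real.exp_nat_mul]
    ring_nf
  obtain ⟨M, rfl⟩ : ∃ M, N = M + 1 := ⟨N - 1, (Nat.succ_pred_eq_of_pos hN).symm⟩
  have hinv : a⁻¹ ≤ 2 := by
    have h1 : (7 : ℝ) / 8 ≤ a := by
      have := Real.add_one_le_exp (-θ ^ 2 / 2)
      rw [← ha] at this
      nlinarith
    rw [inv_le_comm₀ ha0 (by norm_num)]
    linarith
  have haM : a ^ M ≤ 2 * a ^ (M + 1) := by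
    have : a ^ M = a ^ (M + 1) * a⁻¹ := by
      field_simp
      ring
    rw [this]
    calc a ^ (M + 1) * a⁻¹ ≤ a ^ (M + 1) * 2 :=
      mul_le_mul_of_nonneg_left hinv (by positivity)
    _ = 2 * a ^ (M + 1) := by ring
  have T1 : a ^ (M + 1) - c ^ (M + 1) ≤ ((M + 1 : ℕ) : ℝ) * θ ^ 4 / 2 * a ^ (M + 1) := by
    calc a ^ (M + 1) - c ^ (M + 1) ≤ (M + 1 : ℝ) * a ^ M * (a - c) :=
      pow_sub_pow_le_succ hc0 hca M
    _ ≤ (M + 1 : ℝ) * (2 * a ^ (M + 1)) * (θ ^ 4 / 4) := by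
        have hd : a - c ≤ θ ^ 4 / 4 := exp_neg_sq_sub_cos_le h0 hθ1
        have hd0 : 0 ≤ a - c := by linarith
        have hM0 : (0:ℝ) ≤ (M : ℝ) + 1 := by positivity
        have := mul_le_mul (mul_le_mul_of_nonneg_left haM hM0) hd hd0
          (by positivity : (0:ℝ) ≤ (M + 1 : ℝ) * (2 * a ^ (M + 1)))
        exact this
    _ = ((M + 1 : ℕ) : ℝ) * θ ^ 4 / 2 * a ^ (M + 1) := by push_cast; ring
  have T1' : 0 ≤ a ^ (M + 1) - c ^ (M + 1) := by
    have := pow_le_pow_left₀ hc0 hca (M + 1)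
    linarith
  have T2 : |1 - legP l c| * c ^ (M + 1) ≤ 2 * ((l : ℝ) + 2) ^ 2 * θ ^ 2 * a ^ (M + 1) := by
    have h1 := abs_one_sub_legP_cos_le l h0 h
    have h2 : c ^ (M + 1) ≤ a ^ (M + 1) := pow_le_pow_left₀ hc0 hca (M + 1)
    have h3 : (0:ℝ) ≤ c ^ (M + 1) := by positivity
    calc |1 - legP l c| * c ^ (M + 1) ≤ (2 * ((l : ℝ) + 2) ^ 2 * θ ^ 2) * a ^ (M + 1) :=
      mul_le_mul h1 h2 h3 (by positivity)
    _ = _ := by ring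
  have hdecomp : Real.exp (-(↑(M + 1) : ℝ) * θ ^ 2 / 2) - legP l c * c ^ (M + 1)
      = (a ^ (M + 1) - c ^ (M + 1)) + (1 - legP l c) * c ^ (M + 1) := by
    rw [hE]; ring
  rw [hdecomp]
  calc |(a ^ (M + 1) - c ^ (M + 1)) + (1 - legP l c) * c ^ (M + 1)|
      ≤ |a ^ (M + 1) - c ^ (M + 1)| + |(1 - legP l c) * c ^ (M + 1)| := abs_add_le _ _
  _ = (a ^ (M + 1) - c ^ (M + 1)) + |1 - legP l c| * c ^ (M + 1) := by
      rw [abs_of_nonneg T1', abs_mul, abs_of_nonneg (by positivity : (0:ℝ) ≤ c ^ (M + 1))]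
  _ ≤ ((M + 1 : ℕ) : ℝ) * θ ^ 4 / 2 * a ^ (M + 1)
      + 2 * ((l : ℝ) + 2) ^ 2 * θ ^ 2 * a ^ (M + 1) := add_le_add T1 T2
  _ = ((↑(M + 1) : ℝ) * θ ^ 4 / 2 + 2 * ((l : ℝ) + 2) ^ 2 * θ ^ 2) * a ^ (M + 1) := by
      push_cast; ring
  _ = ((↑(M + 1) : ℝ) * θ ^ 4 / 2 + 2 * ((l : ℝ) + 2) ^ 2 * θ ^ 2)
      * Real.exp (-(↑(M + 1) : ℝ) * θ ^ 2 / 2) := by rw [hE]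

lemma gauss_integrableOn {ν q : ℝ} (hν : 0 < ν) (hq : -1 < q) :
    IntegrableOn (fun x : ℝ => x ^ q * Real.exp (-ν * x ^ 2 / 2)) (Ioi 0) := by
  have h := integrableOn_rpow_mul_exp_neg_mul_sq (b := ν / 2) (by linarith) hq
  have : (fun x : ℝ => x ^ q * Real.exp (-(ν / 2) * x ^ 2))
      = fun x : ℝ => x ^ q * Real.exp (-ν * x ^ 2 / 2) := by
    funext x
    ring_nf
  rwa [this] at h

lemma gauss_scale (q : ℝ) {ν : ℝ} (hν : 0 < ν) :
    ∫ x in Ioi (0:ℝ), x ^ q * Real.exp (-ν * x ^ 2 / 2)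
      = Real.sqrt ν ^ (-(q + 1)) * ∫ u in Ioi (0:ℝ), u ^ q * Real.exp (-u ^ 2 / 2) := by
  have hb : 0 < Real.sqrt ν := Real.sqrt_pos.mpr hν
  have h := integral_comp_mul_left_Ioi (fun u => u ^ q * Real.exp (-u ^ 2 / 2)) 0 hb
  rw [mul_zero] at h
  have hcong : ∀ x ∈ Ioi (0:ℝ), (Real.sqrt ν * x) ^ q * Real.exp (-(Real.sqrt ν * x) ^ 2 / 2)
      = Real.sqrt ν ^ q * (x ^ q * Real.exp (-ν * x ^ 2 / 2)) := by
    intro x hx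
    rw [mul_rpow hb.le (le_of_lt hx), mul_pow, Real.sq_sqrt hν.le]
    ring
  rw [setIntegral_congr_fun measurableSet_Ioi hcong, MeasureTheory.integral_const_mul _ _] at h
  have hq0 : Real.sqrt ν ^ q ≠ 0 := (Real.rpow_pos_of_pos hb q).ne'
  have e1 : Real.sqrt ν ^ (-(q + 1)) * Real.sqrt ν ^ q = (Real.sqrt ν)⁻¹ := by
    rw [← Real.rpow_add hb, show -(q + 1) + q = -1 by ring, Real.rpow_neg_one]
  calc ∫ x in Ioi (0:ℝ), x ^ q * Real.exp (-ν * x ^ 2 / 2)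
      = (Real.sqrt ν ^ q)⁻¹ * (Real.sqrt ν ^ q * ∫ x in Ioi (0:ℝ), x ^ q * Real.exp (-ν * x ^ 2 / 2)) := by
        rw [← mul_assoc, inv_mul_cancel₀ hq0, one_mul]
  _ = (Real.sqrt ν ^ q)⁻¹ * ((Real.sqrt ν)⁻¹ • ∫ u in Ioi (0:ℝ), u ^ q * Real.exp (-u ^ 2 / 2)) := by
        rw [h]
  _ = Real.sqrt ν ^ (-(q + 1)) * ∫ u in Ioi (0:ℝ), u ^ q * Real.exp (-u ^ 2 / 2) := by
        rw [smul_eq_mul, ← mul_assoc]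
        congr 1
        rw [← e1]
        rw [← Real.rpow_neg hb.le q]
        rw [← Real.rpow_add hb, ← Real.rpow_add hb]
        congr 1
        ring

lemma rpow_mul_pow_nat {θ : ℝ} (hθ : 0 < θ) (p : ℝ) (n : ℕ) :
    θ ^ p * θ ^ n = θ ^ (p + n) := by
  rw [← Real.rpow_natCast θ n, ← Real.rpow_add hθ]

lemma one_sub_exp_neg_mem {x : ℝ} (hx : 0 ≤ x) :
    0 ≤ 1 - Real.exp (-x) ∧ 1 - Real.exp (-x) ≤ x := by
  constructor
  · have : Real.exp (-x) ≤ 1 := Real.exp_le_one_iff.mpr (by linarith)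
    linarith
  · have := Real.add_one_le_exp (-x)
    nlinarith [Real.exp_pos (-x)]

lemma G_contOn (s ν : ℝ) :
    ContinuousOn (fun θ : ℝ => θ ^ (-2 * s - 1) * (1 - Real.exp (-ν * θ ^ 2 / 2))) (Ioi 0) := by
  apply ContinuousOn.mul
  · exact fun x hx => (Real.continuousAt_rpow_const x _ (Or.inl (ne_of_gt hx))).continuousWithinAt
  · apply Continuous.continuousOn
    continuity

lemma G_integrableOn {s ν : ℝ} (hs0 : 0 < s) (hs1 : s < 1) (hν : 0 < ν) :
    IntegrableOn (fun θ : ℝ => θ ^ (-2 * s - 1) * (1 - Real.exp (-ν * θ ^ 2 / 2))) (Ioi 0) := by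
  rw [← Ioc_union_Ioi_eq_Ioi (zero_le_one (α := ℝ)), integrableOn_union]
  constructor
  · apply Integrable.mono' (g := fun θ : ℝ => ν / 2 * θ ^ (1 - 2 * s))
    · exact (((intervalIntegrable_iff_integrableOn_Ioc_of_le zero_le_one).mp
        (intervalIntegral.intervalIntegrable_rpow' (by linarith))).const_mul _)
    · exact ((G_contOn s ν).mono Ioc_subset_Ioi_self).aestronglyMeasurable measurableSet_Ioc
    · refine (ae_restrict_iff' measurableSet_Ioc).mpr (Filter.Eventually.of_forall fun θ hθ => ?_)
      have hθ0 : 0 < θ := hθ.1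
      have hx : 0 ≤ ν * θ ^ 2 / 2 := by positivity
      obtain ⟨he0, he1⟩ := one_sub_exp_neg_mem hx
      rw [show -(ν * θ ^ 2 / 2) = -ν * θ ^ 2 / 2 by ring] at he0 he1
      rw [Real.norm_eq_abs, abs_mul, abs_of_nonneg (Real.rpow_nonneg hθ0.le _),
        abs_of_nonneg he0]
      calc θ ^ (-2 * s - 1) * (1 - Real.exp (-ν * θ ^ 2 / 2))
          ≤ θ ^ (-2 * s - 1) * (ν * θ ^ 2 / 2) :=
            mul_le_mul_of_nonneg_left he1 (Real.rpow_nonneg hθ0.le _)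
      _ = ν / 2 * (θ ^ (-2 * s - 1) * θ ^ (2 : ℕ)) := by push_cast; ring
      _ = ν / 2 * θ ^ (1 - 2 * s) := by
          rw [rpow_mul_pow_nat hθ0]
          congr 1
          push_cast
          ring
  · apply Integrable.mono' (g := fun θ : ℝ => θ ^ (-2 * s - 1))
    · exact integrableOn_Ioi_rpow_of_lt (by linarith) one_pos
    · exact ((G_contOn s ν).mono (Ioi_subset_Ioi zero_le_one)).aestronglyMeasurable
        measurableSet_Ioi
    · refine (ae_restrict_iff' measurableSet_Ioi).mpr (Filter.Eventually.of_forall fun θ hθ => ?_)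
      have hθ0 : (0:ℝ) < θ := lt_trans one_pos hθ
      have hx : 0 ≤ ν * θ ^ 2 / 2 := by positivity
      obtain ⟨he0, he1⟩ := one_sub_exp_neg_mem hx
      rw [show -(ν * θ ^ 2 / 2) = -ν * θ ^ 2 / 2 by ring] at he0 he1
      rw [Real.norm_eq_abs, abs_mul, abs_of_nonneg (Real.rpow_nonneg hθ0.le _),
        abs_of_nonneg he0]
      have hle1 : 1 - Real.exp (-ν * θ ^ 2 / 2) ≤ 1 := by
        nlinarith [Real.exp_pos (-ν * θ ^ 2 / 2)]
      calc θ ^ (-2 * s - 1) * (1 - Real.exp (-ν * θ ^ 2 / 2)) ≤ θ ^ (-2 * s - 1) * 1 :=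
        mul_le_mul_of_nonneg_left hle1 (Real.rpow_nonneg hθ0.le _)
      _ = θ ^ (-2 * s - 1) := mul_one _

lemma G_scale {s ν : ℝ} (hν : 0 < ν) :
    ∫ θ in Ioi (0:ℝ), θ ^ (-2 * s - 1) * (1 - Real.exp (-ν * θ ^ 2 / 2))
      = ν ^ s * ∫ θ in Ioi (0:ℝ), θ ^ (-2 * s - 1) * (1 - Real.exp (-θ ^ 2 / 2)) := by
  have hb : 0 < Real.sqrt ν := Real.sqrt_pos.mpr hν
  have h := integral_comp_mul_left_Ioi
    (fun θ => θ ^ (-2 * s - 1) * (1 - Real.exp (-θ ^ 2 / 2))) 0 hb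
  rw [mul_zero] at h
  have hcong : ∀ x ∈ Ioi (0:ℝ),
      (Real.sqrt ν * x) ^ (-2 * s - 1) * (1 - Real.exp (-(Real.sqrt ν * x) ^ 2 / 2))
      = Real.sqrt ν ^ (-2 * s - 1) * (x ^ (-2 * s - 1) * (1 - Real.exp (-ν * x ^ 2 / 2))) := by
    intro x hx
    rw [mul_rpow hb.le (le_of_lt hx), mul_pow, Real.sq_sqrt hν.le]
    ring_nf
  rw [setIntegral_congr_fun measurableSet_Ioi hcong, MeasureTheory.integral_const_mul _ _] at h
  have hq0 : Real.sqrt ν ^ (-2 * s - 1) ≠ 0 := (Real.rpow_pos_of_pos hb _).ne'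
  have key : ν ^ s = (Real.sqrt ν ^ (-2 * s - 1))⁻¹ * (Real.sqrt ν)⁻¹ := by
    rw [← Real.rpow_neg hb.le, ← Real.rpow_neg_one (Real.sqrt ν), ← Real.rpow_add hb,
      Real.sqrt_eq_rpow, ← Real.rpow_mul hν.le]
    congr 1
    ring
  calc ∫ x in Ioi (0:ℝ), x ^ (-2 * s - 1) * (1 - Real.exp (-ν * x ^ 2 / 2))
      = (Real.sqrt ν ^ (-2 * s - 1))⁻¹ * (Real.sqrt ν ^ (-2 * s - 1)
        * ∫ x in Ioi (0:ℝ), x ^ (-2 * s - 1) * (1 - Real.exp (-ν * x ^ 2 / 2))) := by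
        rw [← mul_assoc, inv_mul_cancel₀ hq0, one_mul]
  _ = (Real.sqrt ν ^ (-2 * s - 1))⁻¹ * ((Real.sqrt ν)⁻¹
        * ∫ θ in Ioi (0:ℝ), θ ^ (-2 * s - 1) * (1 - Real.exp (-θ ^ 2 / 2))) := by
        rw [h, smul_eq_mul]
  _ = ν ^ s * ∫ θ in Ioi (0:ℝ), θ ^ (-2 * s - 1) * (1 - Real.exp (-θ ^ 2 / 2)) := by
        rw [key, mul_assoc]

lemma legP_continuous (l : ℕ) : Continuous (legP l) := by
  have h : legP l = fun x => ∑ k ∈ Finset.range (l + 1),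
      (l.choose k : ℝ) ^ 2 * ((x - 1) / 2) ^ k * ((x + 1) / 2) ^ (l - k) :=
    funext (legP_eq_sum l)
  rw [h]
  exact continuous_finset_sum _ fun k _ => by fun_prop

set_option maxHeartbeats 2000000 in
theorem lam2B_asymptotic (s : ℝ) (hs0 : 0 < s) (hs1 : s < 1) :
    ∀ ε : ℝ, 0 < ε → ∃ R : ℝ, 0 < R ∧ ∀ n l : ℕ,
      R ≤ Real.sqrt ((2 * n + l : ℕ) : ℝ) / ((l : ℝ) + 2) →
      |lam2B s n l / ((2 * n + l : ℕ) : ℝ) ^ s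
          - ∫ θ in Set.Ioi (0:ℝ), θ ^ (-2 * s - 1) * (1 - Real.exp (-θ ^ 2 / 2))| ≤ ε := by
  intro ε hε
  set I := ∫ θ in Set.Ioi (0:ℝ), θ ^ (-2 * s - 1) * (1 - Real.exp (-θ ^ 2 / 2)) with hI
  set C1 := ∫ u in Ioi (0:ℝ), u ^ (1 - 2 * s) * Real.exp (-u ^ 2 / 2) with hC1def
  set C3 := ∫ u in Ioi (0:ℝ), u ^ (3 - 2 * s) * Real.exp (-u ^ 2 / 2) with hC3def
  have hC1 : 0 ≤ C1 := setIntegral_nonneg measurableSet_Ioi fun x hx =>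
    mul_nonneg (Real.rpow_nonneg (le_of_lt hx) _) (Real.exp_pos _).le
  have hC3 : 0 ≤ C3 := setIntegral_nonneg measurableSet_Ioi fun x hx =>
    mul_nonneg (Real.rpow_nonneg (le_of_lt hx) _) (Real.exp_pos _).le
  set K := C3 / 2 + 2 * C1 with hKdef
  have hK : 0 ≤ K := by positivity
  -- choose R
  have htend : Filter.Tendsto (fun R : ℝ => K * R ^ (-(2:ℝ)) + R ^ (-(2*s)) / (2*s))
      Filter.atTop (nhds 0) := by
    have h1 := (tendsto_rpow_neg_atTop (by norm_num : (0:ℝ) < 2)).const_mul K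
    have h2 := (tendsto_rpow_neg_atTop (by linarith : (0:ℝ) < 2*s)).div_const (2*s)
    have := h1.add h2
    simpa using this
  obtain ⟨R, hRε, hR1⟩ :=
    ((htend.eventually_lt_const hε).and (Filter.eventually_ge_atTop (1:ℝ))).exists
  refine ⟨R, by linarith, ?_⟩
  intro n l hRnl
  set ν : ℝ := ((2 * n + l : ℕ) : ℝ) with hνdef
  have hl2 : (0:ℝ) < (l : ℝ) + 2 := by positivity
  have hR0 : (0:ℝ) < R := by linarith
  have hsqrtν : R * ((l:ℝ) + 2) ≤ Real.sqrt ν := by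
    rw [← le_div_iff₀ hl2] ; exact hRnl
  have hν0' : (0:ℝ) ≤ ν := Nat.cast_nonneg _
  have hsq : Real.sqrt ν ^ 2 = ν := Real.sq_sqrt hν0'
  have hl2' : (2:ℝ) ≤ (l:ℝ) + 2 := by
    have : (0:ℝ) ≤ (l:ℝ) := Nat.cast_nonneg l
    linarith
  have hsqν0 : 0 ≤ Real.sqrt ν := Real.sqrt_nonneg ν
  have hmulself : Real.sqrt ν * Real.sqrt ν = ν := Real.mul_self_sqrt hν0'
  have h2R : 2 * R ≤ Real.sqrt ν := by nlinarith
  have hν4 : 4 * R ^ 2 ≤ ν := by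
    have := mul_le_mul h2R h2R (by positivity) hsqν0
    nlinarith
  have hν0 : (0:ℝ) < ν := by nlinarith
  have hν1 : (1:ℝ) ≤ ν := by nlinarith
  have hN1 : 1 ≤ 2 * n + l := by
    rw [hνdef] at hν1
    exact_mod_cast hν1
  have hl2ν : ((l:ℝ) + 2) ^ 2 * R ^ 2 ≤ ν := by
    have := mul_le_mul hsqrtν hsqrtν (by positivity) hsqν0
    nlinarith
  have hνR2 : R ^ 2 ≤ ν := by nlinarith
  set a : ℝ := 1 / ((l : ℝ) + 2) with hadef
  have ha0 : 0 < a := by positivity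
  have hνs : (0:ℝ) < ν ^ s := Real.rpow_pos_of_pos hν0 s
  -- function definitions
  set G : ℝ → ℝ := fun θ => θ ^ (-2 * s - 1) * (1 - Real.exp (-ν * θ ^ 2 / 2)) with hGdef
  set H : ℝ → ℝ := fun θ => θ ^ (-2 * s - 1) *
    (Real.exp (-ν * θ ^ 2 / 2) - legP l (Real.cos θ) * Real.cos θ ^ (2 * n + l)) with hHdef
  set D : ℝ → ℝ := fun θ => ν / 2 * (θ ^ (3 - 2 * s) * Real.exp (-ν * θ ^ 2 / 2))
    + 2 * ((l:ℝ) + 2) ^ 2 * (θ ^ (1 - 2 * s) * Real.exp (-ν * θ ^ 2 / 2)) with hDdef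
  have hG_int : IntegrableOn G (Ioi 0) := G_integrableOn hs0 hs1 hν0
  have hG_Ioc : IntegrableOn G (Ioc 0 a) := hG_int.mono_set Ioc_subset_Ioi_self
  have hG_Ioi : IntegrableOn G (Ioi a) := hG_int.mono_set (Ioi_subset_Ioi ha0.le)
  have hD_int : IntegrableOn D (Ioi 0) :=
    ((gauss_integrableOn hν0 (by linarith : (-1:ℝ) < 3 - 2*s)).const_mul (ν/2)).add
      ((gauss_integrableOn hν0 (by linarith : (-1:ℝ) < 1 - 2*s)).const_mul _)
  have hD_Ioc : IntegrableOn D (Ioc 0 a) := hD_int.mono_set Ioc_subset_Ioi_self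
  -- pointwise bound for H
  have hHbound : ∀ θ ∈ Ioc (0:ℝ) a, |H θ| ≤ D θ := by
    intro θ hθ
    have hθ0 : 0 < θ := hθ.1
    have hθa : ((l:ℝ) + 2) * θ ≤ 1 := by
      rw [mul_comm, ← le_div_iff₀ hl2]
      exact hθ.2
    have hkey := key_pointwise l (2 * n + l) hN1 hθ0.le hθa
    have hrp : (0:ℝ) ≤ θ ^ (-2 * s - 1) := Real.rpow_nonneg hθ0.le _
    have e4 : θ ^ (-2 * s - 1) * θ ^ (4:ℕ) = θ ^ (3 - 2 * s) := by
      rw [rpow_mul_pow_nat hθ0]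
      congr 1
      push_cast
      ring
    have e2 : θ ^ (-2 * s - 1) * θ ^ (2:ℕ) = θ ^ (1 - 2 * s) := by
      rw [rpow_mul_pow_nat hθ0]
      congr 1
      push_cast
      ring
    calc |H θ| = θ ^ (-2 * s - 1) *
        |Real.exp (-ν * θ ^ 2 / 2) - legP l (Real.cos θ) * Real.cos θ ^ (2 * n + l)| := by
          rw [hHdef, abs_mul, abs_of_nonneg hrp]
    _ ≤ θ ^ (-2 * s - 1) * ((ν * θ ^ 4 / 2 + 2 * ((l:ℝ) + 2) ^ 2 * θ ^ 2)
          * Real.exp (-ν * θ ^ 2 / 2)) := mul_le_mul_of_nonneg_left hkey hrp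
    _ = ν / 2 * ((θ ^ (-2 * s - 1) * θ ^ (4:ℕ)) * Real.exp (-ν * θ ^ 2 / 2))
          + 2 * ((l:ℝ) + 2) ^ 2 * ((θ ^ (-2 * s - 1) * θ ^ (2:ℕ)) * Real.exp (-ν * θ ^ 2 / 2)) := by
          push_cast
          ring
    _ = D θ := by rw [e4, e2]
  -- H measurable and integrable on Ioc
  have hHcont : ContinuousOn H (Ioi 0) := by
    apply ContinuousOn.mul
    · exact fun x hx => (Real.continuousAt_rpow_const x _ (Or.inl (ne_of_gt hx))).continuousWithinAt
    · apply Continuous.continuousOn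
      have hc : Continuous fun θ : ℝ => legP l (Real.cos θ) :=
        (legP_continuous l).comp Real.continuous_cos
      fun_prop
  have hH_meas : AEStronglyMeasurable H (volume.restrict (Ioc 0 a)) :=
    (hHcont.mono Ioc_subset_Ioi_self).aestronglyMeasurable measurableSet_Ioc
  have hH_int : IntegrableOn H (Ioc 0 a) := by
    apply Integrable.mono' hD_Ioc hH_meas
    refine (ae_restrict_iff' measurableSet_Ioc).mpr (Filter.Eventually.of_forall fun θ hθ => ?_)
    rw [Real.norm_eq_abs]
    exact hHbound θ hθ
  -- splitting
  have eq1 : lam2B s n l = (∫ θ in Ioc (0:ℝ) a, G θ) + ∫ θ in Ioc (0:ℝ) a, H θ := by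
    rw [lam2B, intervalIntegral.integral_of_le ha0.le, ← integral_add hG_Ioc hH_int]
    refine setIntegral_congr_fun measurableSet_Ioc fun θ hθ => ?_
    rw [hGdef, hHdef]
    push_cast
    ring
  have eq3 : ν ^ s * I = (∫ θ in Ioc (0:ℝ) a, G θ) + ∫ θ in Ioi a, G θ := by
    rw [← G_scale hν0, ← setIntegral_union (Ioc_disjoint_Ioi le_rfl) measurableSet_Ioi
      hG_Ioc hG_Ioi, Ioc_union_Ioi_eq_Ioi ha0.le]
  -- bound on H integral
  have hHint_bound : |∫ θ in Ioc (0:ℝ) a, H θ| ≤ ν ^ s * (K / R ^ 2) := by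
    have step1 : |∫ θ in Ioc (0:ℝ) a, H θ| ≤ ∫ θ in Ioc (0:ℝ) a, |H θ| := by
      simpa [Real.norm_eq_abs] using
        norm_integral_le_integral_norm (μ := volume.restrict (Ioc 0 a)) H
    have step2 : ∫ θ in Ioc (0:ℝ) a, |H θ| ≤ ∫ θ in Ioc (0:ℝ) a, D θ :=
      setIntegral_mono_on hH_int.abs hD_Ioc measurableSet_Ioc hHbound
    have step3 : ∫ θ in Ioc (0:ℝ) a, D θ ≤ ∫ θ in Ioi (0:ℝ), D θ := by
      apply setIntegral_mono_set hD_int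
      · refine (ae_restrict_iff' measurableSet_Ioi).mpr (Filter.Eventually.of_forall fun θ hθ => ?_)
        have hθ0 : (0:ℝ) < θ := hθ
        rw [hDdef]
        positivity
      · exact HasSubset.Subset.eventuallyLE Ioc_subset_Ioi_self
    have step4 : ∫ θ in Ioi (0:ℝ), D θ
        = ν / 2 * (Real.sqrt ν ^ (-(3 - 2*s + 1)) * C3)
          + 2 * ((l:ℝ) + 2) ^ 2 * (Real.sqrt ν ^ (-(1 - 2*s + 1)) * C1) := by
      rw [hDdef]
      rw [MeasureTheory.integral_add ((gauss_integrableOn hν0 (by linarith)).const_mul (ν/2))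
        ((gauss_integrableOn hν0 (by linarith)).const_mul _),
        MeasureTheory.integral_const_mul, MeasureTheory.integral_const_mul,
        gauss_scale (3 - 2*s) hν0, gauss_scale (1 - 2*s) hν0]
    have hpow : ∀ x : ℝ, Real.sqrt ν ^ x = ν ^ (x / 2) := fun x => by
      rw [Real.sqrt_eq_rpow, ← Real.rpow_mul hν0']
      congr 1
      ring
    have hmix : ∀ t : ℝ, ν * ν ^ (t - 1) = ν ^ t := fun t => by
      nth_rewrite 1 [← Real.rpow_one ν]
      rw [← Real.rpow_add hν0]
      norm_num
    have hinv : ν ^ (s - 1) ≤ ν ^ s / R ^ 2 := by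
      have h1 : ν ^ (s - 1) = ν ^ s * ν⁻¹ := by
        rw [← Real.rpow_neg_one ν, ← Real.rpow_add hν0, show s + -1 = s - 1 by ring]
      have h2 : ν⁻¹ ≤ (R ^ 2)⁻¹ := by
        apply inv_anti₀ (by positivity) hνR2
      rw [h1, div_eq_mul_inv]
      exact mul_le_mul_of_nonneg_left h2 hνs.le
    have term1 : ν / 2 * (Real.sqrt ν ^ (-(3 - 2*s + 1)) * C3) ≤ ν ^ s / R ^ 2 * (C3 / 2) := by
      rw [hpow]
      have e : (-(3 - 2*s + 1)) / 2 = s - 2 := by ring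
      rw [e]
      have : ν / 2 * (ν ^ (s - 2) * C3) = ν * ν ^ (s - 2) * (C3 / 2) := by ring
      rw [this]
      have e2 : ν * ν ^ (s - 2) = ν ^ (s - 1) := by
        have : (s - 2 : ℝ) = (s - 1) - 1 := by ring
        rw [this, hmix]
      rw [e2]
      exact mul_le_mul_of_nonneg_right hinv (by positivity)
    have term2 : 2 * ((l:ℝ) + 2) ^ 2 * (Real.sqrt ν ^ (-(1 - 2*s + 1)) * C1)
        ≤ ν ^ s / R ^ 2 * (2 * C1) := by
      rw [hpow]
      have e : (-(1 - 2*s + 1)) / 2 = s - 1 := by ring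
      rw [e]
      have h1 : ((l:ℝ) + 2) ^ 2 ≤ ν / R ^ 2 := by
        rw [le_div_iff₀ (by positivity : (0:ℝ) < R ^ 2)]
        exact hl2ν
      have h2 : 0 ≤ ν ^ (s-1) * C1 := by positivity
      calc 2 * ((l:ℝ) + 2) ^ 2 * (ν ^ (s - 1) * C1) ≤ 2 * (ν / R ^ 2) * (ν ^ (s - 1) * C1) := by
            apply mul_le_mul_of_nonneg_right _ h2
            linarith
      _ = (ν * ν ^ (s - 1)) / R ^ 2 * (2 * C1) := by ring
      _ = ν ^ s / R ^ 2 * (2 * C1) := by rw [hmix]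
    calc |∫ θ in Ioc (0:ℝ) a, H θ| ≤ ∫ θ in Ioi (0:ℝ), D θ := by linarith
    _ ≤ ν ^ s / R ^ 2 * (C3 / 2) + ν ^ s / R ^ 2 * (2 * C1) := by rw [step4]; exact add_le_add term1 term2
    _ = ν ^ s * (K / R ^ 2) := by rw [hKdef]; ring
  -- bound on tail integral
  have htail_nonneg : 0 ≤ ∫ θ in Ioi a, G θ := by
    apply setIntegral_nonneg measurableSet_Ioi
    intro θ hθ
    have hθ0 : 0 < θ := lt_trans ha0 hθ
    have h1 := (one_sub_exp_neg_mem (x := ν * θ ^ 2 / 2) (by positivity)).1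
    rw [show -(ν * θ ^ 2 / 2) = -ν * θ ^ 2 / 2 by ring] at h1
    show 0 ≤ θ ^ (-2*s-1) * (1 - Real.exp (-ν * θ ^ 2 / 2))
    exact mul_nonneg (Real.rpow_nonneg hθ0.le _) h1
  have htail_bound : ∫ θ in Ioi a, G θ ≤ ν ^ s * (R ^ (-(2*s)) / (2*s)) := by
    have step1 : ∫ θ in Ioi a, G θ ≤ ∫ θ in Ioi a, θ ^ (-2*s-1) := by
      apply setIntegral_mono_on hG_Ioi (integrableOn_Ioi_rpow_of_lt (by linarith) ha0)
        measurableSet_Ioi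
      intro θ hθ
      have hθ0 : 0 < θ := lt_trans ha0 hθ
      have h1 := (one_sub_exp_neg_mem (x := ν * θ ^ 2 / 2) (by positivity))
      rw [show -(ν * θ ^ 2 / 2) = -ν * θ ^ 2 / 2 by ring] at h1
      have hle1 : 1 - Real.exp (-ν * θ ^ 2 / 2) ≤ 1 := by
        nlinarith [Real.exp_pos (-ν * θ ^ 2 / 2)]
      calc G θ ≤ θ ^ (-2*s-1) * 1 := by
            rw [hGdef]
            exact mul_le_mul_of_nonneg_left hle1 (Real.rpow_nonneg hθ0.le _)
      _ = θ ^ (-2*s-1) := mul_one _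
    have step2 : ∫ θ in Ioi a, θ ^ (-2*s-1) = a ^ (-(2*s)) / (2*s) := by
      rw [integral_Ioi_rpow_of_lt (by linarith) ha0]
      rw [show (-2*s-1+1 : ℝ) = -(2*s) by ring]
      rw [div_eq_div_iff (by linarith) (by linarith)]
      ring
    have step3 : a ^ (-(2*s)) = ((l:ℝ) + 2) ^ (2*s) := by
      rw [hadef, one_div, Real.inv_rpow hl2.le, Real.rpow_neg hl2.le, inv_inv]
    have step4 : ((l:ℝ) + 2) ^ (2*s) ≤ (Real.sqrt ν / R) ^ (2*s) := by
      apply Real.rpow_le_rpow hl2.le _ (by linarith)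
      rw [le_div_iff₀ hR0]
      linarith [hsqrtν]
    have step5 : (Real.sqrt ν / R) ^ (2*s) = ν ^ s * R ^ (-(2*s)) := by
      rw [Real.div_rpow hsqν0 hR0.le, Real.rpow_neg hR0.le, div_eq_mul_inv]
      congr 1
      rw [Real.sqrt_eq_rpow, ← Real.rpow_mul hν0']
      congr 1
      ring
    calc ∫ θ in Ioi a, G θ ≤ a ^ (-(2*s)) / (2*s) := by rw [← step2]; exact step1
    _ ≤ ν ^ s * R ^ (-(2*s)) / (2*s) := by
        apply div_le_div_of_nonneg_right _ (by linarith)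
        rw [step3]
        exact le_of_le_of_eq step4 step5
    _ = ν ^ s * (R ^ (-(2*s)) / (2*s)) := by ring
  -- final assembly
  have hdiff : lam2B s n l - ν ^ s * I = (∫ θ in Ioc (0:ℝ) a, H θ) - ∫ θ in Ioi a, G θ := by
    rw [eq1, eq3]
    ring
  have hmain : |lam2B s n l - ν ^ s * I| ≤ ν ^ s * (K / R ^ 2 + R ^ (-(2*s)) / (2*s)) := by
    rw [hdiff]
    calc |(∫ θ in Ioc (0:ℝ) a, H θ) - ∫ θ in Ioi a, G θ|
        ≤ |∫ θ in Ioc (0:ℝ) a, H θ| + |∫ θ in Ioi a, G θ| := abs_sub _ _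
    _ = |∫ θ in Ioc (0:ℝ) a, H θ| + ∫ θ in Ioi a, G θ := by rw [abs_of_nonneg htail_nonneg]
    _ ≤ ν ^ s * (K / R ^ 2) + ν ^ s * (R ^ (-(2*s)) / (2*s)) := add_le_add hHint_bound htail_bound
    _ = ν ^ s * (K / R ^ 2 + R ^ (-(2*s)) / (2*s)) := by ring
  have hRquot : K / R ^ 2 + R ^ (-(2*s)) / (2*s) ≤ ε := by
    have hR2 : R ^ (-(2:ℝ)) = (R ^ 2)⁻¹ := by
      rw [Real.rpow_neg hR0.le]
      congr 1
      rw [show ((2:ℝ)) = ((2:ℕ):ℝ) by norm_num, Real.rpow_natCast]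
    have := hRε
    rw [hR2] at this
    rw [div_eq_mul_inv K]
    linarith
  have hstep : lam2B s n l / ν ^ s - I = (lam2B s n l - ν ^ s * I) / ν ^ s := by
    field_simp
  rw [hstep, abs_div, abs_of_pos hνs, div_le_iff₀ hνs]
  calc |lam2B s n l - ν ^ s * I| ≤ ν ^ s * (K / R ^ 2 + R ^ (-(2*s)) / (2*s)) := hmain
  _ ≤ ν ^ s * ε := mul_le_mul_of_nonneg_left hRquot hνs.le
  _ = ε * ν ^ s := mul_comm _ _
end

section
/- There exists a positive constant c > 0 such that for all integers n, l ≥ 0, c·l^{2s} ≤ λ_{3,B}(n,l) ≤ c⁻¹·(1+l)^{2s}. -/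
open MeasureTheory Real

/-- The term `λ_{3,B}(n,l)` in the splitting of the Boltzmann eigenvalues. -/
noncomputable def lam3B (s : ℝ) (n l : ℕ) : ℝ :=
  ∫ θ in (1 / ((l : ℝ) + 2))..(Real.pi / 4),
    θ ^ (-2 * s - 1) * (1 - legP l (Real.cos θ) * (Real.cos θ) ^ (2 * n + l))

open Polynomial

namespace LegAux

noncomputable def U (l : ℕ) : ℝ[X] := (X ^ 2 - 1) ^ l

lemma iterderiv_eval (n : ℕ) (p : ℝ[X]) :
    iteratedDeriv n (fun y => p.eval y) = fun x => (derivative^[n] p).eval x := by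
  rw [iteratedDeriv_eq_iterate]
  induction n generalizing p with
  | zero => simp
  | succ n ih =>
    rw [Function.iterate_succ_apply, Function.iterate_succ_apply]
    have h : _root_.deriv (fun y => p.eval y) = fun y => (derivative p).eval y := by
      funext y; exact Polynomial.deriv (p := p)
    rw [h, ih]

lemma hsq : derivative ((X : ℝ[X]) ^ 2 - 1) = 2 * X := by
  rw [derivative_sub, derivative_one, derivative_X_pow, Polynomial.C_eq_natCast]
  norm_num

lemma base (l : ℕ) : (X ^ 2 - 1 : ℝ[X]) * derivative (U l) =
    (2 * (l : ℝ[X])) * (X * U l) := by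
  cases l with
  | zero => simp [U]
  | succ k =>
    have h1 : derivative (U (k + 1)) = C ((k : ℝ) + 1) * (X ^ 2 - 1) ^ k * (2 * X) := by
      rw [U, derivative_pow, hsq]
      push_cast
      ring
    have h2 : (C ((k : ℝ) + 1) : ℝ[X]) = (k : ℝ[X]) + 1 := by
      simp
    rw [h1, h2, U]
    have h3 : ((X : ℝ[X]) ^ 2 - 1) ^ (k + 1) = (X ^ 2 - 1) * (X ^ 2 - 1) ^ k := by ring
    rw [h3]
    push_cast
    ring

-- E recurrence
lemma E (l : ℕ) : ∀ m : ℕ, (X ^ 2 - 1 : ℝ[X]) * derivative (derivative^[m] (U l)) =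
    (2 * (l : ℝ[X]) - 2 * (m : ℝ[X])) * (X * derivative^[m] (U l))
      + ((m : ℝ[X]) * (2 * (l : ℝ[X]) + 1 - (m : ℝ[X]))) * derivative^[m - 1] (U l) := by
  intro m
  induction m with
  | zero => simpa using base l
  | succ m ih =>
    have hd := congrArg derivative ih
    simp only [derivative_mul, derivative_add, derivative_sub, derivative_pow, derivative_X,
      derivative_one, derivative_natCast, derivative_ofNat, derivative_X_pow, map_ofNat, Polynomial.C_eq_natCast,
      Function.iterate_zero, id_eq] at hd
    norm_num at hd
    cases m with
    | zero =>
      simp only [Function.iterate_one, Function.iterate_zero, id_eq, Nat.zero_sub,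
        Nat.cast_zero, Nat.cast_one, Nat.sub_self, zero_add, Nat.cast_ofNat] at hd ⊢
      push_cast
      linear_combination hd
    | succ k =>
      have hkk : (k + 1 : ℕ) - 1 = k := rfl
      have hkk2 : (k + 1 + 1 : ℕ) - 1 = k + 1 := rfl
      rw [hkk] at hd
      rw [hkk2]
      have hD : derivative (derivative^[k] (U l)) = derivative^[k + 1] (U l) :=
        (Function.iterate_succ_apply' _ _ _).symm
      have hD2 : derivative (derivative^[k + 1] (U l)) = derivative^[k + 1 + 1] (U l) :=
        (Function.iterate_succ_apply' _ _ _).symm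
      rw [hD2] at hd
      rw [hD] at hd
      push_cast at hd ⊢
      linear_combination hd

end LegAux

namespace LegAux2
open LegAux

noncomputable def Q (l : ℕ) : ℝ[X] := derivative^[l] (U l)

/-- Legendre-type ODE predicate. -/
def LO (k : ℕ) (μ : ℝ) (f : ℝ[X]) : Prop :=
  (1 - X ^ 2) * derivative (derivative f) =
    (2 * (k : ℝ[X]) + 2) * (X * derivative f) - C μ * f

lemma ode_Q (l : ℕ) : LO 0 ((l : ℝ) * (l + 1)) (Q l) := by
  have h := E l (l + 1)
  have h1 : derivative^[l + 1] (U l) = derivative (Q l) :=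
    Function.iterate_succ_apply' _ _ _
  have h2 : (l + 1 : ℕ) - 1 = l := rfl
  have h0 : derivative^[l] (U l) = Q l := rfl
  rw [h1, h2, h0] at h
  unfold LO
  have hC : (C ((l : ℝ) * (l + 1)) : ℝ[X]) = (l : ℝ[X]) * ((l : ℝ[X]) + 1) := by
    simp [map_mul, map_add]
  rw [hC]
  push_cast at h ⊢
  linear_combination - h

lemma LO_step {k : ℕ} {μ : ℝ} {f : ℝ[X]} (h : LO k μ f) :
    LO (k + 1) (μ - (2 * k + 2)) (derivative f) := by
  unfold LO at h ⊢
  have hd := congrArg derivative h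
  simp only [derivative_mul, derivative_add, derivative_sub, derivative_one, derivative_X,
    derivative_natCast, derivative_ofNat, derivative_X_pow, Polynomial.C_eq_natCast,
    derivative_C, map_sub, map_mul, map_add, map_ofNat, map_natCast, map_one] at hd ⊢
  norm_num at hd ⊢
  push_cast at hd ⊢
  linear_combination hd

lemma Q_eval_one (l : ℕ) : (Q l).eval 1 = (l.factorial : ℝ) * 2 ^ l := by
  have h1 : Q l = l.factorial • Polynomial.hasseDeriv l (U l) := by
    show derivative^[l] (U l) = _
    rw [← Polynomial.factorial_smul_hasseDeriv]
    rfl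
  have h2 : (Polynomial.hasseDeriv l (U l)).eval 1 = (Polynomial.taylor 1 (U l)).coeff l :=
    (Polynomial.taylor_coeff (r := (1:ℝ)) (f := U l) l).symm
  have h3 : Polynomial.taylor 1 (U l) = X ^ l * (X + 2) ^ l := by
    rw [Polynomial.taylor_apply, U, Polynomial.pow_comp, Polynomial.sub_comp,
      Polynomial.pow_comp, Polynomial.X_comp, Polynomial.one_comp, ← mul_pow]
    congr 1
    rw [Polynomial.C_1]
    ring
  have h4 : (X ^ l * ((X : ℝ[X]) + 2) ^ l).coeff l = (((X : ℝ[X]) + 2) ^ l).coeff 0 := by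
    have := Polynomial.coeff_X_pow_mul (((X : ℝ[X]) + 2) ^ l) l 0
    simpa using this
  have h5 : (((X : ℝ[X]) + 2) ^ l).coeff 0 = 2 ^ l := by
    rw [Polynomial.coeff_zero_eq_eval_zero]
    simp
  rw [h1]
  rw [nsmul_eq_mul, Polynomial.eval_mul, Polynomial.eval_natCast, h2, h3, h4, h5]
end LegAux2

namespace LegAux3
open LegAux LegAux2

lemma LO_eval_one {k : ℕ} {μ : ℝ} {f : ℝ[X]} (h : LO k μ f) :
    (derivative f).eval 1 = μ / (2 * k + 2) * f.eval 1 := by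
  have he := congrArg (Polynomial.eval (1 : ℝ)) h
  simp only [Polynomial.eval_mul, Polynomial.eval_sub, Polynomial.eval_add, Polynomial.eval_one,
    Polynomial.eval_pow, Polynomial.eval_X, Polynomial.eval_natCast, Polynomial.eval_C,
    Polynomial.eval_ofNat] at he
  have hk : (2 * (k : ℝ) + 2) ≠ 0 := by positivity
  field_simp
  linarith [he]

lemma LO_deriv_nonneg {k : ℕ} {μ : ℝ} {f : ℝ[X]} (h : LO k μ f) :
    derivative (C μ * f ^ 2 + (1 - X ^ 2) * (derivative f) ^ 2) =
      (4 * (k : ℝ[X]) + 2) * (X * (derivative f) ^ 2) := by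
  unfold LO at h
  simp only [derivative_add, derivative_mul, derivative_C, derivative_pow, derivative_sub,
    derivative_one, derivative_X, Polynomial.C_eq_natCast, derivative_X_pow, map_ofNat] at *
  norm_num at *
  linear_combination (2 * derivative f) * h

lemma LO_abs_le {k : ℕ} {μ : ℝ} {f : ℝ[X]} (h : LO k μ f) (hμ : 0 < μ)
    {x : ℝ} (hx0 : 0 ≤ x) (hx1 : x ≤ 1) : |f.eval x| ≤ |f.eval 1| := by
  set g : ℝ[X] := C μ * f ^ 2 + (1 - X ^ 2) * (derivative f) ^ 2 with hg
  have hmono : MonotoneOn (fun t : ℝ => g.eval t) (Set.Icc 0 1) := by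
    apply monotoneOn_of_deriv_nonneg (convex_Icc 0 1) (Polynomial.continuous g).continuousOn
      (Polynomial.differentiable g).differentiableOn
    intro t ht
    rw [interior_Icc] at ht
    rw [Polynomial.deriv, LO_deriv_nonneg h]
    simp only [Polynomial.eval_mul, Polynomial.eval_add, Polynomial.eval_natCast,
      Polynomial.eval_pow, Polynomial.eval_X, Polynomial.eval_ofNat]
    have h1 : (0:ℝ) ≤ 4 * (k : ℝ) + 2 := by positivity
    have h2 : (0:ℝ) ≤ t * (derivative f).eval t ^ 2 :=
      mul_nonneg ht.1.le (sq_nonneg _)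
    exact mul_nonneg h1 h2
  have hle := hmono (Set.mem_Icc.2 ⟨hx0, hx1⟩) (Set.mem_Icc.2 ⟨le_refl 0 |>.trans zero_le_one, le_refl 1⟩) hx1
  have hx2 : μ * f.eval x ^ 2 ≤ g.eval x := by
    rw [hg]
    simp only [Polynomial.eval_add, Polynomial.eval_mul, Polynomial.eval_C, Polynomial.eval_sub,
      Polynomial.eval_one, Polynomial.eval_pow, Polynomial.eval_X]
    nlinarith [mul_nonneg (by nlinarith : (0:ℝ) ≤ 1 - x ^ 2) (sq_nonneg ((derivative f).eval x))]
  have hg1 : g.eval 1 = μ * f.eval 1 ^ 2 := by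
    rw [hg]
    simp
  have : μ * f.eval x ^ 2 ≤ μ * f.eval 1 ^ 2 := by
    calc μ * f.eval x ^ 2 ≤ g.eval x := hx2
    _ ≤ g.eval 1 := hle
    _ = μ * f.eval 1 ^ 2 := hg1
  have hsq : f.eval x ^ 2 ≤ f.eval 1 ^ 2 := le_of_mul_le_mul_left (by linarith) hμ
  exact sq_le_sq.1 hsq

end LegAux3

namespace LegAux4
open LegAux LegAux2 LegAux3

lemma taylor_upper {f : ℝ[X]} {M : ℝ}
    (hM : ∀ t : ℝ, 0 ≤ t → t ≤ 1 → (derivative (derivative f)).eval t ≤ M)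
    {x : ℝ} (hx0 : 0 ≤ x) (hx1 : x ≤ 1) :
    f.eval x ≤ f.eval 1 + (derivative f).eval 1 * (x - 1) + M / 2 * (1 - x) ^ 2 := by
  set B : ℝ := (derivative f).eval 1 with hB
  set p1 : ℝ[X] := C B - C M * (1 - X) - derivative f with hp1
  have hp1d : derivative p1 = C M - derivative (derivative f) := by
    rw [hp1]
    simp only [derivative_sub, derivative_mul, derivative_C, derivative_one, derivative_X]
    ring
  have hmono1 : MonotoneOn (fun t : ℝ => p1.eval t) (Set.Icc 0 1) := by
    apply monotoneOn_of_deriv_nonneg (convex_Icc 0 1) (Polynomial.continuous p1).continuousOn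
      (Polynomial.differentiable p1).differentiableOn
    intro t ht
    rw [interior_Icc] at ht
    rw [Polynomial.deriv, hp1d]
    simp only [Polynomial.eval_sub, Polynomial.eval_C]
    have := hM t ht.1.le ht.2.le
    linarith
  have hp1one : p1.eval 1 = 0 := by
    rw [hp1]; simp [hB]
  have hp1le : ∀ t : ℝ, 0 ≤ t → t ≤ 1 → p1.eval t ≤ 0 := by
    intro t ht0 ht1
    have := hmono1 (Set.mem_Icc.2 ⟨ht0, ht1⟩) (Set.mem_Icc.2 ⟨zero_le_one, le_refl 1⟩) ht1
    simpa [hp1one] using this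
  set p2 : ℝ[X] := C (f.eval 1) + C B * (X - 1) + C (M / 2) * (1 - X) ^ 2 - f with hp2
  have hp2d : derivative p2 = p1 := by
    rw [hp2, hp1]
    simp only [derivative_sub, derivative_add, derivative_mul, derivative_C, derivative_one,
      derivative_X, derivative_pow, Polynomial.C_eq_natCast, map_ofNat]
    norm_num
    have h2a : (C (M / 2) : ℝ[X]) * 2 = C M := by
      rw [show (2 : ℝ[X]) = C 2 from (map_ofNat C 2).symm, ← map_mul]
      norm_num
    linear_combination ((X:ℝ[X]) - 1) * h2a
  have hanti : AntitoneOn (fun t : ℝ => p2.eval t) (Set.Icc 0 1) := by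
    apply antitoneOn_of_deriv_nonpos (convex_Icc 0 1) (Polynomial.continuous p2).continuousOn
      (Polynomial.differentiable p2).differentiableOn
    intro t ht
    rw [interior_Icc] at ht
    rw [Polynomial.deriv, hp2d]
    exact hp1le t ht.1.le ht.2.le
  have hp2one : p2.eval 1 = 0 := by rw [hp2]; simp
  have hle := hanti (Set.mem_Icc.2 ⟨hx0, hx1⟩) (Set.mem_Icc.2 ⟨zero_le_one, le_refl 1⟩) hx1
  have h2 : 0 ≤ p2.eval x := by simpa [hp2one] using hle
  rw [hp2] at h2
  simp only [Polynomial.eval_sub, Polynomial.eval_add, Polynomial.eval_mul, Polynomial.eval_C,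
    Polynomial.eval_pow, Polynomial.eval_one, Polynomial.eval_X] at h2
  linarith

end LegAux4

namespace LegAux5
open LegAux LegAux2 LegAux3 LegAux4

lemma legP_eq (l : ℕ) (x : ℝ) :
    legP l x = (1 / (2 ^ l * Nat.factorial l : ℝ)) * (Q l).eval x := by
  unfold legP
  have h : (fun y : ℝ => (y ^ 2 - 1) ^ l) = fun y => (U l).eval y := by
    funext y; simp [U]
  rw [h, iterderiv_eval]
  rfl

lemma fpos (l : ℕ) : (0:ℝ) < 2 ^ l * Nat.factorial l := by
  positivity

lemma legP_zero (x : ℝ) : legP 0 x = 1 := by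
  rw [legP_eq]
  simp [Q, U]

lemma legP_abs_le (l : ℕ) {x : ℝ} (hx0 : 0 ≤ x) (hx1 : x ≤ 1) : |legP l x| ≤ 1 := by
  cases l with
  | zero => rw [legP_zero]; norm_num
  | succ m =>
    set l := m + 1
    have hμ : (0:ℝ) < (l : ℝ) * (l + 1) := by positivity
    have h := LO_abs_le (ode_Q l) hμ hx0 hx1
    rw [Q_eval_one] at h
    have habs : |(l.factorial : ℝ) * 2 ^ l| = (l.factorial : ℝ) * 2 ^ l := by
      rw [abs_of_pos]; positivity
    rw [habs] at h
    rw [legP_eq, abs_mul]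
    have h1 : |1 / (2 ^ l * (l.factorial : ℝ))| = 1 / (2 ^ l * l.factorial) := by
      rw [abs_of_pos]; positivity
    rw [h1]
    rw [div_mul_eq_mul_div, one_mul, div_le_one (fpos l)]
    calc |(Q l).eval x| ≤ (l.factorial : ℝ) * 2 ^ l := h
    _ = 2 ^ l * l.factorial := by ring

lemma legP_le_one (l : ℕ) {x : ℝ} (hx0 : 0 ≤ x) (hx1 : x ≤ 1) : legP l x ≤ 1 :=
  le_trans (le_abs_self _) (legP_abs_le l hx0 hx1)

lemma legP_gap (l : ℕ) (hl : 3 ≤ l) {x : ℝ} (hx0 : 0 ≤ x) (hx1 : x ≤ 1) :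
    legP l x ≤ 1 - ((l:ℝ) * ((l:ℝ) + 1) / 2) * (1 - x)
      + ((l:ℝ) * ((l:ℝ) + 1) * ((l:ℝ) * ((l:ℝ) + 1) - 2) / 16) * (1 - x) ^ 2 := by
  have hl3 : (3:ℝ) ≤ (l:ℝ) := by exact_mod_cast hl
  have hQ1 : (Q l).eval 1 = (l.factorial : ℝ) * 2 ^ l := Q_eval_one l
  have hQ1pos : (0:ℝ) < (Q l).eval 1 := by rw [hQ1]; positivity
  have hmu12 : (12:ℝ) ≤ (l:ℝ) * ((l:ℝ) + 1) := by nlinarith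
  have d1 : (derivative (Q l)).eval 1 = (l:ℝ) * ((l:ℝ) + 1) / 2 * (Q l).eval 1 := by
    have h := LO_eval_one (ode_Q l)
    norm_num at h
    linear_combination h
  have ode1 := LO_step (ode_Q l)
  have d2 : (derivative (derivative (Q l))).eval 1 =
      ((l:ℝ) * ((l:ℝ) + 1) - 2) / 4 * (derivative (Q l)).eval 1 := by
    have h := LO_eval_one ode1
    norm_num at h
    linear_combination h
  have ode2 := LO_step ode1
  have hM2 : (derivative (derivative (Q l))).eval 1 =
      (l:ℝ) * ((l:ℝ) + 1) * ((l:ℝ) * ((l:ℝ) + 1) - 2) / 8 * (Q l).eval 1 := by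
    rw [d2, d1]; ring
  have hMnonneg : 0 ≤ (l:ℝ) * ((l:ℝ) + 1) * ((l:ℝ) * ((l:ℝ) + 1) - 2) / 8 * (Q l).eval 1 := by
    have h8 : (0:ℝ) ≤ (l:ℝ) * ((l:ℝ) + 1) * ((l:ℝ) * ((l:ℝ) + 1) - 2) / 8 := by nlinarith [hmu12]
    positivity
  have hM : ∀ t : ℝ, 0 ≤ t → t ≤ 1 →
      (derivative (derivative (Q l))).eval t ≤
        (l:ℝ) * ((l:ℝ) + 1) * ((l:ℝ) * ((l:ℝ) + 1) - 2) / 8 * (Q l).eval 1 := by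
    intro t ht0 ht1
    have habs := LO_abs_le ode2 (by push_cast; nlinarith [hmu12]) ht0 ht1
    rw [hM2, abs_of_nonneg hMnonneg] at habs
    exact le_trans (le_abs_self _) habs
  have htay := taylor_upper hM hx0 hx1
  rw [d1] at htay
  have hc : (1 / (2 ^ l * (l.factorial:ℝ))) * (Q l).eval 1 = 1 := by
    rw [hQ1]
    field_simp
  have hcpos : (0:ℝ) ≤ 1 / (2 ^ l * (l.factorial:ℝ)) := by positivity
  rw [legP_eq]
  calc (1 / (2 ^ l * (l.factorial:ℝ))) * (Q l).eval x
      ≤ (1 / (2 ^ l * (l.factorial:ℝ))) * ((Q l).eval 1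
        + (l:ℝ) * ((l:ℝ) + 1) / 2 * (Q l).eval 1 * (x - 1)
        + ((l:ℝ) * ((l:ℝ) + 1) * ((l:ℝ) * ((l:ℝ) + 1) - 2) / 8 * (Q l).eval 1) / 2 * (1 - x) ^ 2) :=
      mul_le_mul_of_nonneg_left htay hcpos
  _ = ((1 / (2 ^ l * (l.factorial:ℝ))) * (Q l).eval 1) * (1 - (l:ℝ) * ((l:ℝ) + 1) / 2 * (1 - x)
        + (l:ℝ) * ((l:ℝ) + 1) * ((l:ℝ) * ((l:ℝ) + 1) - 2) / 16 * (1 - x) ^ 2) := by ring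
  _ = 1 - ((l:ℝ) * ((l:ℝ) + 1) / 2) * (1 - x)
        + ((l:ℝ) * ((l:ℝ) + 1) * ((l:ℝ) * ((l:ℝ) + 1) - 2) / 16) * (1 - x) ^ 2 := by
      rw [hc]; ring

end LegAux5

namespace LegAux6
open LegAux LegAux2 LegAux3 LegAux4 LegAux5 intervalIntegral

lemma cont_legP (l : ℕ) : Continuous (legP l) := by
  have h : legP l = fun x => (1 / (2 ^ l * Nat.factorial l : ℝ)) * (Q l).eval x := by
    funext x; exact legP_eq l x
  rw [h]
  exact continuous_const.mul (Polynomial.continuous _)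

lemma cont_fac (n l : ℕ) :
    Continuous (fun θ : ℝ => 1 - legP l (Real.cos θ) * (Real.cos θ) ^ (2 * n + l)) := by
  apply continuous_const.sub
  exact ((cont_legP l).comp Real.continuous_cos).mul (Real.continuous_cos.pow _)

lemma integrable_f (s : ℝ) (n l : ℕ) {a b : ℝ} (ha : 0 < a) (hab : a ≤ b) :
    IntervalIntegrable
      (fun θ => θ ^ (-2 * s - 1) * (1 - legP l (Real.cos θ) * (Real.cos θ) ^ (2 * n + l)))
      MeasureTheory.volume a b := by
  apply ContinuousOn.intervalIntegrable
  apply ContinuousOn.mul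
  · apply ContinuousOn.rpow_const continuousOn_id
    intro θ hθ
    rw [Set.uIcc_of_le hab] at hθ
    exact Or.inl (ne_of_gt (lt_of_lt_of_le ha hθ.1))
  · exact (cont_fac n l).continuousOn

lemma integrable_rpow (s : ℝ) (C : ℝ) {a b : ℝ} (ha : 0 < a) (hab : a ≤ b) :
    IntervalIntegrable (fun θ : ℝ => C * θ ^ (-2 * s - 1)) MeasureTheory.volume a b := by
  apply ContinuousOn.intervalIntegrable
  apply ContinuousOn.mul continuousOn_const
  apply ContinuousOn.rpow_const continuousOn_id
  intro θ hθ
  rw [Set.uIcc_of_le hab] at hθ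
  exact Or.inl (ne_of_gt (lt_of_lt_of_le ha hθ.1))

lemma int_rpow_eval {s : ℝ} (hs0 : 0 < s) {a b : ℝ} (ha : 0 < a) (hab : a ≤ b) :
    ∫ θ in a..b, θ ^ (-2 * s - 1) = (a ^ (-(2 * s)) - b ^ (-(2 * s))) / (2 * s) := by
  rw [integral_rpow]
  · have h1 : -2 * s - 1 + 1 = -(2 * s) := by ring
    rw [h1]
    field_simp
    ring
  · refine Or.inr ⟨by intro h; nlinarith, ?_⟩
    rw [Set.uIcc_of_le hab]
    intro h
    exact absurd h.1 (by linarith)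

lemma int_lower {f g : ℝ → ℝ} {a b u v : ℝ} (hau : a ≤ u) (huv : u ≤ v) (hvb : v ≤ b)
    (hf : IntervalIntegrable f MeasureTheory.volume a b)
    (hg : IntervalIntegrable g MeasureTheory.volume u v)
    (hnn : ∀ x ∈ Set.Icc a b, 0 ≤ f x) (hle : ∀ x ∈ Set.Icc u v, g x ≤ f x) :
    ∫ x in u..v, g x ≤ ∫ x in a..b, f x := by
  have hsub1 : Set.uIcc a u ⊆ Set.uIcc a b := by
    rw [Set.uIcc_of_le hau, Set.uIcc_of_le (le_trans hau (le_trans huv hvb))]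
    exact Set.Icc_subset_Icc le_rfl (le_trans huv hvb)
  have hsub2 : Set.uIcc u v ⊆ Set.uIcc a b := by
    rw [Set.uIcc_of_le huv, Set.uIcc_of_le (le_trans hau (le_trans huv hvb))]
    exact Set.Icc_subset_Icc hau hvb
  have hsub3 : Set.uIcc v b ⊆ Set.uIcc a b := by
    rw [Set.uIcc_of_le hvb, Set.uIcc_of_le (le_trans hau (le_trans huv hvb))]
    exact Set.Icc_subset_Icc (le_trans hau huv) le_rfl
  have h1 : IntervalIntegrable f MeasureTheory.volume a u := hf.mono_set hsub1
  have h2 : IntervalIntegrable f MeasureTheory.volume u v := hf.mono_set hsub2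
  have h3 : IntervalIntegrable f MeasureTheory.volume v b := hf.mono_set hsub3
  have e1 : (∫ x in a..u, f x) + (∫ x in u..v, f x) + (∫ x in v..b, f x) = ∫ x in a..b, f x := by
    rw [integral_add_adjacent_intervals h1 h2, integral_add_adjacent_intervals (h1.trans h2) h3]
  have p1 : 0 ≤ ∫ x in a..u, f x := by
    apply integral_nonneg hau
    intro x hx
    exact hnn x ⟨hx.1, le_trans hx.2 (le_trans huv hvb)⟩
  have p3 : 0 ≤ ∫ x in v..b, f x := by
    apply integral_nonneg hvb
    intro x hx
    exact hnn x ⟨le_trans hau (le_trans huv hx.1), hx.2⟩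
  have p2 : (∫ x in u..v, g x) ≤ ∫ x in u..v, f x := by
    apply integral_mono_on huv hg h2
    exact hle
  linarith

end LegAux6

namespace LegAux7
open LegAux2 LegAux5 LegAux6 intervalIntegral Real

lemma pi4_lb : (3:ℝ)/4 ≤ π/4 := by linarith [Real.pi_gt_three]
lemma pi4_ub : π/4 ≤ 1 := by linarith [Real.pi_lt_d2]
lemma pisq : π^2 ≤ 10 := by nlinarith [Real.pi_lt_d2, Real.pi_pos]

lemma a_pos (l : ℕ) : 0 < 1 / ((l:ℝ) + 2) := by positivity
lemma a_le (l : ℕ) : 1 / ((l:ℝ) + 2) ≤ 1/2 := by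
  rw [div_le_div_iff₀ (by positivity) (by norm_num)]
  have : (0:ℝ) ≤ (l:ℝ) := Nat.cast_nonneg l
  linarith
lemma a_le_pi4 (l : ℕ) : 1 / ((l:ℝ) + 2) ≤ π/4 := le_trans (a_le l) (by linarith [pi4_lb])

lemma cos_mem {θ : ℝ} (h0 : 0 ≤ θ) (h : θ ≤ π/4) : 0 ≤ Real.cos θ ∧ Real.cos θ ≤ 1 := by
  constructor
  · apply Real.cos_nonneg_of_mem_Icc
    constructor
    · linarith [Real.pi_pos]
    · linarith [Real.pi_pos]
  · exact Real.cos_le_one θ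

lemma fac_bounds (n l : ℕ) {θ : ℝ} (h0 : 0 ≤ θ) (h : θ ≤ π/4) :
    0 ≤ 1 - legP l (Real.cos θ) * (Real.cos θ) ^ (2*n+l) ∧
    1 - legP l (Real.cos θ) * (Real.cos θ) ^ (2*n+l) ≤ 2 := by
  obtain ⟨hc0, hc1⟩ := cos_mem h0 h
  have hP := legP_abs_le l hc0 hc1
  have hcp : |(Real.cos θ) ^ (2*n+l)| ≤ 1 := by
    rw [abs_pow, abs_of_nonneg hc0]
    exact pow_le_one₀ hc0 hc1
  have habs : |legP l (Real.cos θ) * (Real.cos θ) ^ (2*n+l)| ≤ 1 := by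
    rw [abs_mul]
    calc |legP l (Real.cos θ)| * |(Real.cos θ) ^ (2*n+l)|
        ≤ 1 * 1 := mul_le_mul hP hcp (abs_nonneg _) zero_le_one
    _ = 1 := by norm_num
  obtain ⟨hge, hle⟩ := abs_le.1 habs
  constructor <;> linarith

lemma lam3B_nonneg (s : ℝ) (n l : ℕ) : 0 ≤ lam3B s n l := by
  apply integral_nonneg (a_le_pi4 l)
  intro θ hθ
  have hθ0 : 0 < θ := lt_of_lt_of_le (a_pos l) hθ.1
  apply mul_nonneg (Real.rpow_nonneg hθ0.le _)
  exact (fac_bounds n l hθ0.le hθ.2).1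

lemma inv_rpow_neg {x : ℝ} (hx : 0 < x) (y : ℝ) : (x⁻¹) ^ (-y) = x ^ y := by
  rw [Real.inv_rpow hx.le, ← Real.rpow_neg hx.le, neg_neg]

lemma lam3B_upper (s : ℝ) (hs0 : 0 < s) (hs1 : s < 1) (n l : ℕ) :
    lam3B s n l ≤ 4 / s * (1 + (l:ℝ)) ^ (2*s) := by
  set a : ℝ := 1 / ((l:ℝ) + 2) with ha
  have hab : a ≤ π/4 := a_le_pi4 l
  have hap : 0 < a := a_pos l
  have step1 : lam3B s n l ≤ ∫ θ in a..(π/4), 2 * θ ^ (-2*s-1) := by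
    apply integral_mono_on hab (integrable_f s n l hap hab) (integrable_rpow s 2 hap hab)
    intro θ hθ
    have hθ0 : 0 < θ := lt_of_lt_of_le hap hθ.1
    have hr : 0 ≤ θ ^ (-2*s-1) := Real.rpow_nonneg hθ0.le _
    have := (fac_bounds n l hθ0.le hθ.2).2
    calc θ ^ (-2*s-1) * (1 - legP l (Real.cos θ) * (Real.cos θ) ^ (2*n+l))
        ≤ θ ^ (-2*s-1) * 2 := mul_le_mul_of_nonneg_left this hr
    _ = 2 * θ ^ (-2*s-1) := by ring
  have step2 : (∫ θ in a..(π/4), 2 * θ ^ (-2*s-1)) =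
      2 * ((a ^ (-(2*s)) - (π/4) ^ (-(2*s))) / (2*s)) := by
    rw [intervalIntegral.integral_const_mul, int_rpow_eval hs0 hap hab]
  have hpi : (0:ℝ) ≤ (π/4) ^ (-(2*s)) := Real.rpow_nonneg (by positivity) _
  have step3 : 2 * ((a ^ (-(2*s)) - (π/4) ^ (-(2*s))) / (2*s)) ≤ a ^ (-(2*s)) / s := by
    have e : 2 * ((a ^ (-(2*s)) - (π/4) ^ (-(2*s))) / (2*s)) =
        (a ^ (-(2*s)) - (π/4) ^ (-(2*s))) / s := by
      field_simp
    rw [e]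
    gcongr
    linarith
  have ha2 : a ^ (-(2*s)) = ((l:ℝ) + 2) ^ (2*s) := by
    rw [ha, one_div]
    exact inv_rpow_neg (by positivity) _
  have step4 : ((l:ℝ) + 2) ^ (2*s) ≤ 4 * (1 + (l:ℝ)) ^ (2*s) := by
    have h1 : ((l:ℝ) + 2) ^ (2*s) ≤ (2 * (1 + (l:ℝ))) ^ (2*s) := by
      apply Real.rpow_le_rpow (by positivity) (by linarith [Nat.cast_nonneg (α := ℝ) l]) (by positivity)
    have h2 : ((2:ℝ) * (1 + (l:ℝ))) ^ (2*s) = 2 ^ (2*s) * (1 + (l:ℝ)) ^ (2*s) :=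
      Real.mul_rpow (by norm_num) (by positivity)
    have h3 : (2:ℝ) ^ (2*s) ≤ 4 := by
      calc (2:ℝ) ^ (2*s) ≤ 2 ^ (2:ℝ) :=
        Real.rpow_le_rpow_of_exponent_le (by norm_num) (by linarith)
      _ = 4 := by
        rw [show (2:ℝ) = ((2:ℕ):ℝ) by norm_num, Real.rpow_natCast]
        norm_num
    calc ((l:ℝ) + 2) ^ (2*s) ≤ 2 ^ (2*s) * (1 + (l:ℝ)) ^ (2*s) := by rw [← h2]; exact h1
    _ ≤ 4 * (1 + (l:ℝ)) ^ (2*s) :=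
        mul_le_mul_of_nonneg_right h3 (Real.rpow_nonneg (by positivity) _)
  calc lam3B s n l ≤ 2 * ((a ^ (-(2*s)) - (π/4) ^ (-(2*s))) / (2*s)) := by
        rw [← step2]; exact step1
  _ ≤ a ^ (-(2*s)) / s := step3
  _ = ((l:ℝ) + 2) ^ (2*s) / s := by rw [ha2]
  _ ≤ 4 * (1 + (l:ℝ)) ^ (2*s) / s := by gcongr
  _ = 4 / s * (1 + (l:ℝ)) ^ (2*s) := by ring

end LegAux7

namespace LegAux8
open LegAux2 LegAux5 LegAux6 LegAux7 intervalIntegral Real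

lemma one_sub_cos_lb {θ : ℝ} (h0 : 0 ≤ θ) (h : θ ≤ π/4) : θ^2/5 ≤ 1 - Real.cos θ := by
  have h1 : Real.cos θ ≤ 1 - 2/π^2 * θ^2 := by
    apply Real.cos_le_one_sub_mul_cos_sq
    rw [abs_of_nonneg h0]
    linarith [Real.pi_pos]
  have h2 : (1:ℝ)/5 ≤ 2/π^2 := by
    rw [div_le_div_iff₀ (by norm_num) (by positivity)]
    nlinarith [pisq]
  nlinarith [sq_nonneg θ]

lemma one_sub_cos_ub (θ : ℝ) : 1 - Real.cos θ ≤ θ^2/2 := by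
  have := Real.one_sub_sq_div_two_le_cos (x := θ)
  linarith

lemma gap_arith {m d P : ℝ} (hgap : P ≤ 1 - m/2*d + m*(m-2)/16*d^2)
    (hu1 : 9/125 ≤ m*d) (hu2 : m*d ≤ 24/25) (hmd2 : 0 ≤ m*d^2) : P ≤ 31/32 := by
  nlinarith [mul_nonneg (sub_nonneg.2 hu1) (sub_nonneg.2 hu2), hmd2]

set_option maxHeartbeats 1000000 in
/-- Gap estimate: for `l ≥ 3` and `θ ∈ [1/(l+2), 6/(5l)]`, `legP l (cos θ) ≤ 31/32`. -/
lemma legP_gap_num {l : ℕ} (hl : 3 ≤ l) {θ : ℝ} (hθ1 : 1/((l:ℝ)+2) ≤ θ)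
    (hθ2 : θ ≤ 6/(5*(l:ℝ))) : legP l (Real.cos θ) ≤ 31/32 := by
  have hl3 : (3:ℝ) ≤ (l:ℝ) := by exact_mod_cast hl
  have hθ0 : 0 < θ := lt_of_lt_of_le (a_pos l) hθ1
  have hθpi : θ ≤ π/4 := by
    calc θ ≤ 6/(5*(l:ℝ)) := hθ2
    _ ≤ 2/5 := by rw [div_le_div_iff₀ (by positivity) (by norm_num)]; nlinarith
    _ ≤ π/4 := by linarith [pi4_lb]
  obtain ⟨hc0, hc1⟩ := cos_mem hθ0.le hθpi
  have hgap := legP_gap l hl hc0 hc1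
  set d : ℝ := 1 - Real.cos θ with hd
  have hd0 : 0 ≤ d := by linarith
  have hdlb : θ^2/5 ≤ d := one_sub_cos_lb hθ0.le hθpi
  have hdub : d ≤ θ^2/2 := one_sub_cos_ub θ
  set μ : ℝ := (l:ℝ) * ((l:ℝ) + 1) with hμ
  have hμl : (l:ℝ)^2 ≤ μ := by nlinarith
  have hμu : μ ≤ 4/3 * (l:ℝ)^2 := by nlinarith
  -- bounds on t = l * θ
  have ht1 : 3/5 ≤ (l:ℝ) * θ := by
    have h1 : (l:ℝ)/((l:ℝ)+2) ≤ (l:ℝ) * θ := by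
      rw [div_le_iff₀ (by positivity)]
      calc (l:ℝ) = (l:ℝ) * (((l:ℝ)+2) * (1/((l:ℝ)+2))) := by field_simp
      _ ≤ (l:ℝ) * (((l:ℝ)+2) * θ) := by
          apply mul_le_mul_of_nonneg_left ?_ (by positivity)
          apply mul_le_mul_of_nonneg_left hθ1 (by positivity)
      _ = (l:ℝ) * θ * ((l:ℝ)+2) := by ring
    have h2 : (3:ℝ)/5 ≤ (l:ℝ)/((l:ℝ)+2) := by
      rw [div_le_div_iff₀ (by norm_num) (by positivity)]
      nlinarith
    linarith
  have ht2 : (l:ℝ) * θ ≤ 6/5 := by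
    have := mul_le_mul_of_nonneg_left hθ2 (by positivity : (0:ℝ) ≤ (l:ℝ))
    calc (l:ℝ) * θ ≤ (l:ℝ) * (6/(5*(l:ℝ))) := this
    _ = 6/5 := by field_simp
  -- bounds on u = μ * d
  have hu1 : 9/125 ≤ μ * d := by
    calc (9:ℝ)/125 = (3/5)^2/5 := by norm_num
    _ ≤ ((l:ℝ)*θ)^2/5 := by nlinarith
    _ = (l:ℝ)^2 * (θ^2/5) := by ring
    _ ≤ μ * d := by nlinarith
  have hu2 : μ * d ≤ 24/25 := by
    have e1 : μ * d ≤ (4/3*(l:ℝ)^2) * (θ^2/2) :=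
      mul_le_mul hμu hdub hd0 (by positivity)
    have e2 : ((l:ℝ)*θ)^2 ≤ (6/5)^2 := by
      have hlθ : 0 ≤ (l:ℝ)*θ := by positivity
      nlinarith
    calc μ * d ≤ (4/3*(l:ℝ)^2) * (θ^2/2) := e1
    _ = 2/3 * ((l:ℝ)*θ)^2 := by ring
    _ ≤ 2/3 * (6/5)^2 := by linarith
    _ = 24/25 := by norm_num
  have hμd2 : 0 ≤ μ * d^2 := by positivity
  exact gap_arith hgap hu1 hu2 hμd2

lemma lam3B_small (s : ℝ) (hs0 : 0 < s) (hs1 : s < 1) (n l : ℕ) (hl : 1 ≤ l) :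
    1/108 ≤ lam3B s n l := by
  set a : ℝ := 1 / ((l:ℝ) + 2) with ha
  have hap : 0 < a := a_pos l
  have hau : a ≤ 1/3 := by
    rw [ha, div_le_div_iff₀ (by positivity) (by norm_num)]
    have : (1:ℝ) ≤ (l:ℝ) := by exact_mod_cast hl
    linarith
  have huv : (1:ℝ)/3 ≤ π/4 := by linarith [pi4_lb]
  have step : ∫ x in (1/3 : ℝ)..(π/4), (1/45 : ℝ) ≤ lam3B s n l := by
    apply int_lower hau huv le_rfl (integrable_f s n l hap (le_trans hau huv))
      intervalIntegrable_const
    · intro θ hθ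
      have hθ0 : 0 < θ := lt_of_lt_of_le hap hθ.1
      exact mul_nonneg (Real.rpow_nonneg hθ0.le _) (fac_bounds n l hθ0.le hθ.2).1
    · intro θ hθ
      have hθ0 : (0:ℝ) < θ := by linarith [hθ.1]
      have hθ1 : θ ≤ 1 := le_trans hθ.2 pi4_ub
      obtain ⟨hc0, hc1⟩ := cos_mem hθ0.le hθ.2
      have hm1 : 1 ≤ 2*n + l := by omega
      have hcm : (Real.cos θ)^(2*n+l) ≤ Real.cos θ := by
        calc (Real.cos θ)^(2*n+l) ≤ (Real.cos θ)^1 := pow_le_pow_of_le_one hc0 hc1 hm1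
        _ = Real.cos θ := pow_one _
      have hP : legP l (Real.cos θ) * (Real.cos θ)^(2*n+l) ≤ Real.cos θ := by
        calc legP l (Real.cos θ) * (Real.cos θ)^(2*n+l)
            ≤ 1 * (Real.cos θ)^(2*n+l) :=
              mul_le_mul_of_nonneg_right (legP_le_one l hc0 hc1) (pow_nonneg hc0 _)
        _ = (Real.cos θ)^(2*n+l) := one_mul _
        _ ≤ Real.cos θ := hcm
      have hrp : (1:ℝ) ≤ θ ^ (-2*s-1) := by
        apply Real.one_le_rpow_of_pos_of_le_one_of_nonpos hθ0 hθ1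
        linarith
      have hcosub : 1 - Real.cos θ ≥ 1/45 := by
        have := one_sub_cos_lb hθ0.le hθ.2
        have hθ9 : (1:ℝ)/9 ≤ θ^2 := by nlinarith [hθ.1]
        linarith
      calc (1/45 : ℝ) ≤ 1 - Real.cos θ := hcosub
      _ ≤ 1 - legP l (Real.cos θ) * (Real.cos θ)^(2*n+l) := by linarith
      _ = 1 * (1 - legP l (Real.cos θ) * (Real.cos θ)^(2*n+l)) := (one_mul _).symm
      _ ≤ θ ^ (-2*s-1) * (1 - legP l (Real.cos θ) * (Real.cos θ)^(2*n+l)) := by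
          apply mul_le_mul_of_nonneg_right hrp
          linarith
  have hval : ∫ x in (1/3 : ℝ)..(π/4), (1/45 : ℝ) = (π/4 - 1/3) * (1/45) := by
    rw [intervalIntegral.integral_const]
    simp [smul_eq_mul]
  rw [hval] at step
  have : (1:ℝ)/108 ≤ (π/4 - 1/3) * (1/45) := by
    nlinarith [pi4_lb]
  linarith

end LegAux8

namespace LegAux9
open LegAux2 LegAux5 LegAux6 LegAux7 LegAux8 intervalIntegral Real

lemma lam3B_generic (s : ℝ) (hs0 : 0 < s) (hs1 : s < 1) (n l : ℕ) (hl : 3 ≤ l) :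
    11/2304 * (l:ℝ) ^ (2*s) ≤ lam3B s n l := by
  have hl3 : (3:ℝ) ≤ (l:ℝ) := by exact_mod_cast hl
  set a : ℝ := 1 / ((l:ℝ) + 2) with ha
  set v : ℝ := 6 / (5*(l:ℝ)) with hv
  have hap : 0 < a := a_pos l
  have hav : a ≤ v := by
    rw [ha, hv, div_le_div_iff₀ (by positivity) (by positivity)]
    nlinarith
  have hvpi : v ≤ π/4 := by
    rw [hv]
    calc (6:ℝ)/(5*(l:ℝ)) ≤ 2/5 := by
          rw [div_le_div_iff₀ (by positivity) (by norm_num)]; nlinarith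
    _ ≤ π/4 := by linarith [pi4_lb]
  have hab : a ≤ π/4 := le_trans hav hvpi
  have step : ∫ θ in a..v, (1/32 : ℝ) * θ ^ (-2*s-1) ≤ lam3B s n l := by
    apply int_lower le_rfl hav hvpi (integrable_f s n l hap hab)
      (integrable_rpow s (1/32) hap hav)
    · intro θ hθ
      have hθ0 : 0 < θ := lt_of_lt_of_le hap hθ.1
      exact mul_nonneg (Real.rpow_nonneg hθ0.le _) (fac_bounds n l hθ0.le hθ.2).1
    · intro θ hθ
      have hθ0 : 0 < θ := lt_of_lt_of_le hap hθ.1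
      have hθpi : θ ≤ π/4 := le_trans hθ.2 hvpi
      obtain ⟨hc0, hc1⟩ := cos_mem hθ0.le hθpi
      have hgap := legP_gap_num hl hθ.1 hθ.2
      have hfac : (1/32 : ℝ) ≤ 1 - legP l (Real.cos θ) * (Real.cos θ) ^ (2*n+l) := by
        rcases le_or_gt (legP l (Real.cos θ)) 0 with h | h
        · have : legP l (Real.cos θ) * (Real.cos θ) ^ (2*n+l) ≤ 0 :=
            mul_nonpos_of_nonpos_of_nonneg h (pow_nonneg hc0 _)
          linarith
        · have h1 : legP l (Real.cos θ) * (Real.cos θ) ^ (2*n+l) ≤ legP l (Real.cos θ) :=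
            mul_le_of_le_one_right h.le (pow_le_one₀ hc0 hc1)
          linarith
      calc (1/32 : ℝ) * θ ^ (-2*s-1) = θ ^ (-2*s-1) * (1/32) := by ring
      _ ≤ θ ^ (-2*s-1) * (1 - legP l (Real.cos θ) * (Real.cos θ) ^ (2*n+l)) :=
          mul_le_mul_of_nonneg_left hfac (Real.rpow_nonneg hθ0.le _)
  have hval : ∫ θ in a..v, (1/32 : ℝ) * θ ^ (-2*s-1) =
      (1/32) * ((a ^ (-(2*s)) - v ^ (-(2*s))) / (2*s)) := by
    rw [intervalIntegral.integral_const_mul, int_rpow_eval hs0 hap hav]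
  have ha2 : a ^ (-(2*s)) = ((l:ℝ) + 2) ^ (2*s) := by
    rw [ha, one_div]
    exact inv_rpow_neg (by positivity) _
  have hv2 : v ^ (-(2*s)) = (5/6:ℝ) ^ (2*s) * (l:ℝ) ^ (2*s) := by
    have hveq : v = (5*(l:ℝ)/6)⁻¹ := by
      rw [hv, inv_div]
    rw [hveq, inv_rpow_neg (by positivity) _]
    rw [show 5*(l:ℝ)/6 = (5/6) * (l:ℝ) by ring]
    exact Real.mul_rpow (by norm_num) (Nat.cast_nonneg l)
  have hL0 : (0:ℝ) ≤ (l:ℝ) ^ (2*s) := Real.rpow_nonneg (Nat.cast_nonneg l) _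
  have hLa : (l:ℝ) ^ (2*s) ≤ ((l:ℝ) + 2) ^ (2*s) :=
    Real.rpow_le_rpow (Nat.cast_nonneg l) (by linarith) (by positivity)
  have h56 : (5/6:ℝ) ^ (2*s) ≤ 1 - 11/36 * s := by
    have hx : ((5:ℝ)/6) ^ (2*s) = Real.exp (Real.log (5/6) * (2*s)) :=
      Real.rpow_def_of_pos (by norm_num) _
    have hcx := convexOn_exp.2 (Set.mem_univ (0:ℝ))
      (Set.mem_univ (Real.log (5/6) * 2)) (by linarith : (0:ℝ) ≤ 1 - s) hs0.le (by ring)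
    simp only [smul_eq_mul, mul_zero, zero_add, Real.exp_zero, mul_one] at hcx
    have hexp2 : Real.exp (Real.log (5/6) * 2) = 25/36 := by
      rw [show Real.log ((5:ℝ)/6) * 2 = Real.log (5/6) + Real.log (5/6) by ring,
        Real.exp_add, Real.exp_log (by norm_num : (0:ℝ) < 5/6)]
      norm_num
    rw [hexp2] at hcx
    rw [hx, show Real.log ((5:ℝ)/6) * (2*s) = s * (Real.log (5/6) * 2) by ring]
    linarith
  have hv3 : v ^ (-(2*s)) ≤ (1 - 11/36 * s) * (l:ℝ) ^ (2*s) := by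
    rw [hv2]
    exact mul_le_mul_of_nonneg_right h56 hL0
  have hnum : 11/36 * s * (l:ℝ) ^ (2*s) ≤ a ^ (-(2*s)) - v ^ (-(2*s)) := by
    have : (l:ℝ) ^ (2*s) - (1 - 11/36 * s) * (l:ℝ) ^ (2*s) = 11/36 * s * (l:ℝ) ^ (2*s) := by
      ring
    rw [ha2]
    nlinarith [hLa, hv3]
  calc 11/2304 * (l:ℝ) ^ (2*s)
      = (1/32) * ((11/36 * s * (l:ℝ) ^ (2*s)) / (2*s)) := by
        field_simp
        ring
  _ ≤ (1/32) * ((a ^ (-(2*s)) - v ^ (-(2*s))) / (2*s)) := by gcongr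
  _ ≤ lam3B s n l := by rw [← hval]; exact step

end LegAux9

theorem lam3B_bounds (s : ℝ) (hs0 : 0 < s) (hs1 : s < 1) :
    ∃ c : ℝ, 0 < c ∧ ∀ n l : ℕ,
      c * (l : ℝ) ^ (2 * s) ≤ lam3B s n l ∧
      lam3B s n l ≤ c⁻¹ * (1 + (l : ℝ)) ^ (2 * s) := by
  refine ⟨min (min (11/2304) (1/432)) (s/4), by positivity, fun n l => ?_⟩
  set c : ℝ := min (min (11/2304) (1/432)) (s/4) with hc
  have hcpos : 0 < c := by positivity
  have hc1 : c ≤ 11/2304 := le_trans (min_le_left _ _) (min_le_left _ _)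
  have hc2 : c ≤ 1/432 := le_trans (min_le_left _ _) (min_le_right _ _)
  have hc3 : c ≤ s/4 := min_le_right _ _
  constructor
  · -- lower bound
    rcases Nat.lt_or_ge l 1 with h0 | h1
    · interval_cases l
      simp only [Nat.cast_zero]
      rw [Real.zero_rpow (by positivity : 2*s ≠ 0), mul_zero]
      exact LegAux7.lam3B_nonneg s n 0
    · rcases Nat.lt_or_ge l 3 with h2 | h3
      · -- l = 1 or 2
        have hll : ((l:ℝ)) ^ (2*s) ≤ 4 := by
          have hl1 : (1:ℝ) ≤ (l:ℝ) := by exact_mod_cast h1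
          have hl2 : (l:ℝ) ≤ 2 := by
            have : l ≤ 2 := by omega
            exact_mod_cast this
          calc ((l:ℝ)) ^ (2*s) ≤ ((l:ℝ)) ^ (2:ℝ) :=
            Real.rpow_le_rpow_of_exponent_le hl1 (by linarith)
          _ = (l:ℝ)^2 := by
            rw [show ((2:ℝ)) = ((2:ℕ):ℝ) by norm_num, Real.rpow_natCast]
          _ ≤ 4 := by nlinarith
        have hlam := LegAux8.lam3B_small s hs0 hs1 n l h1
        have : c * ((l:ℝ)) ^ (2*s) ≤ (1/432) * 4 :=
          mul_le_mul hc2 hll (Real.rpow_nonneg (Nat.cast_nonneg l) _) (by norm_num)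
        calc c * ((l:ℝ)) ^ (2*s) ≤ (1/432) * 4 := this
        _ = 1/108 := by norm_num
        _ ≤ lam3B s n l := hlam
      · -- l ≥ 3
        have hlam := LegAux9.lam3B_generic s hs0 hs1 n l h3
        calc c * ((l:ℝ)) ^ (2*s) ≤ 11/2304 * ((l:ℝ)) ^ (2*s) :=
          mul_le_mul_of_nonneg_right hc1 (Real.rpow_nonneg (Nat.cast_nonneg l) _)
        _ ≤ lam3B s n l := hlam
  · -- upper bound
    have hup := LegAux7.lam3B_upper s hs0 hs1 n l
    have hinv : 4/s ≤ c⁻¹ := by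
      rw [show (4:ℝ)/s = (s/4)⁻¹ by rw [inv_div]]
      exact inv_anti₀ hcpos hc3
    calc lam3B s n l ≤ 4/s * (1 + (l:ℝ)) ^ (2*s) := hup
    _ ≤ c⁻¹ * (1 + (l:ℝ)) ^ (2*s) :=
        mul_le_mul_of_nonneg_right hinv (Real.rpow_nonneg (by positivity) _)
end

section
/- Let ν be an even function, locally integrable on ℝ∖{0}, such that θ ↦ θ²ν(θ) belongs to L¹(ℝ). Then for every twice continuously differentiable, compactly supported function φ : ℝ → ℂ, the limit lim_{ε→0⁺} ∫_{|θ|≥ε} ν(θ)(φ(θ) − φ(0)) dθ exists and equals ∫₀¹ ∫_ℝ θ²ν(θ) φ''(tθ) dθ (1−t) dt. -/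
open MeasureTheory Real Filter

lemma taylor_aux (φ : ℝ → ℂ) (hφ : ContDiff ℝ 2 φ) (θ : ℝ) :
    φ θ - φ 0 = θ • deriv φ 0 +
      θ ^ 2 • ∫ t in Set.Ioo (0:ℝ) 1, (1 - t) • iteratedDeriv 2 φ (t * θ) := by
  have hφ' : ContDiff ℝ (1 + 1) φ := hφ
  rw [contDiff_succ_iff_deriv] at hφ'
  obtain ⟨hd, -, hd2⟩ := hφ'
  have hd' : Differentiable ℝ (deriv φ) := hd2.differentiable one_ne_zero
  have hψc : Continuous (deriv (deriv φ)) := hd2.continuous_deriv le_rfl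
  have hψ : iteratedDeriv 2 φ = deriv (deriv φ) := by
    rw [iteratedDeriv_succ, iteratedDeriv_one]
  rw [hψ]
  set ψ := deriv (deriv φ) with hψdef
  have hlin : ∀ t : ℝ, HasDerivAt (fun t : ℝ => t * θ) θ t := fun t => by
    simpa using (hasDerivAt_id t).mul_const θ
  have hF : ∀ t : ℝ, HasDerivAt (fun t => φ (t * θ)) (θ • deriv φ (t * θ)) t := by
    intro t
    exact ((hd (t * θ)).hasDerivAt.scomp t (hlin t))
  have hv : ∀ t : ℝ, HasDerivAt (fun t => θ • deriv φ (t * θ)) (θ ^ 2 • ψ (t * θ)) t := by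
    intro t
    have := (((hd' (t * θ)).hasDerivAt.scomp t (hlin t)).const_smul θ)
    simpa [smul_smul, sq, mul_assoc, Function.comp_def, Pi.smul_def, hψdef] using this
  have hu : ∀ t : ℝ, HasDerivAt (fun t : ℝ => (1 : ℂ) - (t : ℂ)) (-1 : ℂ) t := by
    intro t
    simpa using ((Complex.ofRealCLM.hasDerivAt (x := t)).const_sub (1 : ℂ))
  have hderivφcont : Continuous (deriv φ) := hd2.continuous
  have hftc : ∫ t in (0:ℝ)..1, θ • deriv φ (t * θ) = φ (1 * θ) - φ (0 * θ) := by
    apply intervalIntegral.integral_eq_sub_of_hasDerivAt (fun t _ => hF t)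
    exact (Continuous.intervalIntegrable (by fun_prop) 0 1)
  have hibp : ∫ t in (0:ℝ)..1, ((1:ℂ) - (t:ℂ)) * (θ ^ 2 • ψ (t * θ))
      = ((1:ℂ) - 1) * (θ • deriv φ (1 * θ)) - ((1:ℂ) - 0) * (θ • deriv φ (0 * θ))
        - ∫ t in (0:ℝ)..1, (-1 : ℂ) * (θ • deriv φ (t * θ)) := by
    apply intervalIntegral.integral_mul_deriv_eq_deriv_mul
      (fun t _ => by simpa using hu t) (fun t _ => hv t)
    · exact (Continuous.intervalIntegrable (by fun_prop) 0 1)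
    · exact (Continuous.intervalIntegrable (by fun_prop) 0 1)
  have key : θ ^ 2 • ∫ t in Set.Ioo (0:ℝ) 1, (1 - t) • ψ (t * θ)
      = ∫ t in (0:ℝ)..1, ((1:ℂ) - (t:ℂ)) * (θ ^ 2 • ψ (t * θ)) := by
    rw [← MeasureTheory.integral_Ioc_eq_integral_Ioo,
        ← intervalIntegral.integral_of_le zero_le_one, ← intervalIntegral.integral_smul]
    apply intervalIntegral.integral_congr
    intro t _
    simp only [Complex.real_smul, smul_eq_mul]
    push_cast
    ring
  rw [key, hibp]
  simp only [neg_one_mul, intervalIntegral.integral_neg, hftc]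
  simp only [one_mul, zero_mul, sub_self, Complex.real_smul]
  ring

/-- For an even, locally integrable (away from the origin) function `ν` with
`θ²ν(θ) ∈ L¹(ℝ)` and any `C²` compactly supported `φ`, the principal value
`lim_{ε→0⁺} ∫_{|θ|≥ε} ν(θ)(φ(θ) − φ(0)) dθ` exists and equals
`∫₀¹ ∫_ℝ θ²ν(θ) φ''(tθ) dθ (1−t) dt`. -/
theorem finite_part_exists (ν : ℝ → ℝ)
    (hν_even : ∀ᵐ θ ∂(volume : Measure ℝ), ν (-θ) = ν θ)
    (hν_loc : LocallyIntegrableOn ν ({(0:ℝ)}ᶜ))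
    (hν_int : Integrable (fun θ : ℝ => θ ^ 2 * ν θ))
    (φ : ℝ → ℂ) (hφ : ContDiff ℝ 2 φ) (hφc : HasCompactSupport φ) :
    Tendsto (fun ε : ℝ => ∫ θ in {θ : ℝ | ε ≤ |θ|}, ν θ • (φ θ - φ 0))
      (nhdsWithin 0 (Set.Ioi 0))
      (nhds (∫ t in Set.Ioo (0:ℝ) 1,
        (1 - t) • ∫ θ : ℝ, (θ ^ 2 * ν θ) • iteratedDeriv 2 φ (t * θ))) := by
  set ψ := iteratedDeriv 2 φ with hψdef
  have hψc : Continuous ψ := hφ.continuous_iteratedDeriv 2 (by norm_num)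
  have hψsupp : HasCompactSupport ψ := by
    have h1 : HasCompactSupport (deriv φ) := hφc.deriv
    have h2 : HasCompactSupport (deriv (deriv φ)) := h1.deriv
    rw [hψdef, iteratedDeriv_succ, iteratedDeriv_one]
    exact h2
  obtain ⟨C, hC⟩ := hψsupp.exists_bound_of_continuous hψc
  have hC0 : 0 ≤ C := le_trans (norm_nonneg _) (hC 0)
  set c := deriv φ 0 with hcdef
  set g : ℝ → ℂ := fun θ => ∫ t in Set.Ioo (0:ℝ) 1, (1 - t) • ψ (t * θ) with hgdef
  haveI : IsFiniteMeasure (volume.restrict (Set.Ioo (0:ℝ) 1)) :=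
    ⟨by rw [Measure.restrict_apply_univ]; exact measure_Ioo_lt_top⟩
  -- continuity of g
  have hg_cont : Continuous g := by
    apply MeasureTheory.continuous_of_dominated
      (bound := fun _ : ℝ => C)
    · intro θ
      exact (Continuous.aestronglyMeasurable (by fun_prop))
    · intro θ
      filter_upwards [ae_restrict_mem measurableSet_Ioo] with t ht
      have h1 : |1 - t| ≤ 1 := by
        rw [abs_le]; constructor <;> [linarith [ht.2]; linarith [ht.1]]
      calc ‖(1 - t) • ψ (t * θ)‖ = |1 - t| * ‖ψ (t * θ)‖ := by
            rw [norm_smul, Real.norm_eq_abs]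
        _ ≤ 1 * C := mul_le_mul h1 (hC _) (norm_nonneg _) zero_le_one
        _ = C := one_mul C
    · exact integrable_const C
    · exact Eventually.of_forall fun t => by fun_prop
  -- bound on g
  have hg_bound : ∀ θ, ‖g θ‖ ≤ C := by
    intro θ
    have : ‖g θ‖ ≤ C * (volume (Set.Ioo (0:ℝ) 1)).toReal := by
      apply norm_setIntegral_le_of_norm_le_const measure_Ioo_lt_top
      · intro t ht
        have h1 : |1 - t| ≤ 1 := by
          rw [abs_le]; constructor <;> [linarith [ht.2]; linarith [ht.1]]
        calc ‖(1 - t) • ψ (t * θ)‖ = |1 - t| * ‖ψ (t * θ)‖ := by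
              rw [norm_smul, Real.norm_eq_abs]
          _ ≤ 1 * C := mul_le_mul h1 (hC _) (norm_nonneg _) zero_le_one
          _ = C := one_mul C
    simpa [Real.volume_Ioo] using this
  have hne : ∀ᵐ θ : ℝ, θ ≠ 0 := by
    rw [ae_iff]
    simpa using (Real.volume_singleton (a := 0))
  -- ν is a.e. strongly measurable
  have hνm : AEStronglyMeasurable ν (volume : Measure ℝ) := by
    obtain ⟨h, hm, heq⟩ := hν_int.aestronglyMeasurable
    refine ⟨fun θ => h θ / θ ^ 2, (hm.measurable.div (by fun_prop)).stronglyMeasurable, ?_⟩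
    filter_upwards [heq, hne] with θ h1 h2
    field_simp [hne]
    rw [← h1]
    ring
  -- pointwise decomposition
  have hdecomp : ∀ θ : ℝ, ν θ • (φ θ - φ 0) = (θ * ν θ) • c + (θ ^ 2 * ν θ) • g θ := by
    intro θ
    rw [taylor_aux φ hφ θ, smul_add, smul_smul, smul_smul, mul_comm (ν θ) θ,
      mul_comm (ν θ) (θ ^ 2)]
  set S : ℝ → Set ℝ := fun ε => {θ : ℝ | ε ≤ |θ|} with hSdef
  have hSmeas : ∀ ε : ℝ, MeasurableSet (S ε) := fun ε =>
    measurableSet_le measurable_const continuous_abs.measurable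
  -- integrability of (θ²ν)•g on ℝ
  have hI3 : Integrable (fun θ : ℝ => (θ ^ 2 * ν θ) • g θ) := by
    apply Integrable.mono' (hν_int.norm.mul_const C)
    · exact hν_int.aestronglyMeasurable.smul hg_cont.aestronglyMeasurable
    · refine Eventually.of_forall fun θ => ?_
      rw [norm_smul]
      exact mul_le_mul_of_nonneg_left (hg_bound θ) (norm_nonneg _)
  -- main identity for ε > 0
  have main : ∀ ε : ℝ, ε ∈ Set.Ioi (0:ℝ) →
      (∫ θ in S ε, ν θ • (φ θ - φ 0))
        = ∫ θ, (S ε).indicator (fun θ => (θ ^ 2 * ν θ) • g θ) θ := by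
    intro ε hε
    rw [Set.mem_Ioi] at hε
    have hI2 : IntegrableOn (fun θ : ℝ => (θ * ν θ) • c) (S ε) volume := by
      apply Integrable.mono' (g := fun θ => (ε⁻¹ * ‖θ ^ 2 * ν θ‖) * ‖c‖)
        (((hν_int.norm.const_mul ε⁻¹).mul_const ‖c‖).integrableOn)
      · exact ((aestronglyMeasurable_id.mul hνm).smul
          aestronglyMeasurable_const).restrict
      · rw [ae_restrict_iff' (hSmeas ε)]
        refine Eventually.of_forall fun θ hθ => ?_
        have hθ' : ε ≤ |θ| := hθ
        rw [norm_smul]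
        apply mul_le_mul_of_nonneg_right _ (norm_nonneg c)
        have h1 : ‖θ ^ 2 * ν θ‖ = |θ| * ‖θ * ν θ‖ := by
          simp only [Real.norm_eq_abs, pow_two, mul_assoc, abs_mul]
        have h2 : ε * ‖θ * ν θ‖ ≤ |θ| * ‖θ * ν θ‖ :=
          mul_le_mul_of_nonneg_right hθ' (norm_nonneg _)
        calc ‖θ * ν θ‖ = ε⁻¹ * (ε * ‖θ * ν θ‖) := by field_simp
          _ ≤ ε⁻¹ * (|θ| * ‖θ * ν θ‖) :=
              mul_le_mul_of_nonneg_left h2 (inv_nonneg.2 hε.le)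
          _ = ε⁻¹ * ‖θ ^ 2 * ν θ‖ := by rw [h1]
    have hsplit : ∫ θ in S ε, ν θ • (φ θ - φ 0)
        = (∫ θ in S ε, (θ * ν θ) • c) + ∫ θ in S ε, (θ ^ 2 * ν θ) • g θ := by
      have hfe : (fun θ => ν θ • (φ θ - φ 0))
          = fun θ => (θ * ν θ) • c + (θ ^ 2 * ν θ) • g θ := funext hdecomp
      rw [hfe, integral_add hI2 hI3.integrableOn]
    have hodd : ∫ θ in S ε, (θ * ν θ) • c = 0 := by
      set f := (S ε).indicator (fun θ => (θ * ν θ) • c) with hfdef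
      have hSneg : ∀ θ : ℝ, -θ ∈ S ε ↔ θ ∈ S ε := by
        intro θ; simp [hSdef, abs_neg]
      have hodd' : ∀ᵐ θ : ℝ, f (-θ) = -f θ := by
        filter_upwards [hν_even] with θ hθ
        by_cases h : θ ∈ S ε
        · rw [hfdef]
          rw [Set.indicator_of_mem ((hSneg θ).2 h), Set.indicator_of_mem h, hθ,
            neg_mul, neg_smul]
        · rw [hfdef, Set.indicator_of_notMem (fun hc => h ((hSneg θ).1 hc)),
            Set.indicator_of_notMem h, neg_zero]
      have h1 : ∫ θ, f (-θ) = ∫ θ, f θ := integral_neg_eq_self f volume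
      have h2 : ∫ θ, f (-θ) = -∫ θ, f θ := by
        rw [integral_congr_ae hodd', integral_neg]
      have h4 : ∫ θ, f θ = -∫ θ, f θ := h1.symm.trans h2
      rw [← integral_indicator (hSmeas ε), ← hfdef]
      linear_combination h4 / 2
    rw [hsplit, hodd, zero_add, integral_indicator (hSmeas ε)]
  -- dominated convergence
  have hDCT : Tendsto
      (fun ε : ℝ => ∫ θ, (S ε).indicator (fun θ => (θ ^ 2 * ν θ) • g θ) θ)
      (nhdsWithin 0 (Set.Ioi 0)) (nhds (∫ θ, (θ ^ 2 * ν θ) • g θ)) := by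
    apply tendsto_integral_filter_of_dominated_convergence
      (bound := fun θ => ‖θ ^ 2 * ν θ‖ * C)
    · exact Eventually.of_forall fun ε =>
        hI3.aestronglyMeasurable.indicator (hSmeas ε)
    · refine Eventually.of_forall fun ε => Eventually.of_forall fun θ => ?_
      calc ‖(S ε).indicator (fun θ => (θ ^ 2 * ν θ) • g θ) θ‖
          ≤ ‖(θ ^ 2 * ν θ) • g θ‖ := norm_indicator_le_norm_self _ _
        _ ≤ ‖θ ^ 2 * ν θ‖ * C := by
            rw [norm_smul]
            exact mul_le_mul_of_nonneg_left (hg_bound θ) (norm_nonneg _)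
    · exact hν_int.norm.mul_const C
    · filter_upwards [hne] with θ hθ
      have hmem : Set.Iic |θ| ∈ nhdsWithin (0:ℝ) (Set.Ioi 0) :=
        mem_nhdsWithin_of_mem_nhds (Iic_mem_nhds (abs_pos.2 hθ))
      have hev : ∀ᶠ ε in nhdsWithin (0:ℝ) (Set.Ioi 0),
          (fun θ => (θ ^ 2 * ν θ) • g θ) θ
            = (S ε).indicator (fun θ => (θ ^ 2 * ν θ) • g θ) θ := by
        filter_upwards [hmem] with ε hε
        exact (Set.indicator_of_mem (show θ ∈ S ε from hε) (fun θ => (θ ^ 2 * ν θ) • g θ)).symm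
      exact Tendsto.congr' hev tendsto_const_nhds
  -- Fubini
  have hswap : ∫ θ, (θ ^ 2 * ν θ) • g θ
      = ∫ t in Set.Ioo (0:ℝ) 1, (1 - t) • ∫ θ, (θ ^ 2 * ν θ) • ψ (t * θ) := by
    have hint : Integrable
        (Function.uncurry fun (θ t : ℝ) => (θ ^ 2 * ν θ) • ((1 - t) • ψ (t * θ)))
        (volume.prod (volume.restrict (Set.Ioo (0:ℝ) 1))) := by
      have hbd : Integrable (fun p : ℝ × ℝ => ‖p.1 ^ 2 * ν p.1‖ * C)
          (volume.prod (volume.restrict (Set.Ioo (0:ℝ) 1))) := by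
        have := hν_int.norm.mul_prod (μ := volume) (ν := volume.restrict (Set.Ioo (0:ℝ) 1))
          (integrable_const C)
        simpa using this
      apply Integrable.mono' hbd
      · exact hν_int.aestronglyMeasurable.comp_fst.smul
          (Continuous.aestronglyMeasurable (by fun_prop))
      · have hsnd : ∀ᵐ p : ℝ × ℝ ∂(volume.prod (volume.restrict (Set.Ioo (0:ℝ) 1))),
            p.2 ∈ Set.Ioo (0:ℝ) 1 :=
          Measure.quasiMeasurePreserving_snd.tendsto_ae.eventually
            (ae_restrict_mem measurableSet_Ioo)
        filter_upwards [hsnd] with p hp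
        have h1 : |1 - p.2| ≤ 1 := by
          rw [abs_le]; constructor <;> [linarith [hp.2]; linarith [hp.1]]
        calc ‖Function.uncurry (fun (θ t : ℝ) => (θ ^ 2 * ν θ) • ((1 - t) • ψ (t * θ))) p‖
            = ‖p.1 ^ 2 * ν p.1‖ * (|1 - p.2| * ‖ψ (p.2 * p.1)‖) := by
              show ‖(p.1 ^ 2 * ν p.1) • ((1 - p.2) • ψ (p.2 * p.1))‖ = _
              rw [norm_smul, norm_smul, Real.norm_eq_abs, Real.norm_eq_abs]
          _ ≤ ‖p.1 ^ 2 * ν p.1‖ * (1 * C) := by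
              apply mul_le_mul_of_nonneg_left _ (norm_nonneg _)
              exact mul_le_mul h1 (hC _) (norm_nonneg _) zero_le_one
          _ = ‖p.1 ^ 2 * ν p.1‖ * C := by ring
    have h1 : ∀ θ : ℝ, (θ ^ 2 * ν θ) • g θ
        = ∫ t in Set.Ioo (0:ℝ) 1, (θ ^ 2 * ν θ) • ((1 - t) • ψ (t * θ)) := fun θ =>
      (integral_smul _ _).symm
    simp_rw [h1]
    rw [MeasureTheory.integral_integral_swap hint]
    refine integral_congr_ae (Eventually.of_forall fun t => ?_)
    dsimp only
    rw [← integral_smul]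
    refine integral_congr_ae (Eventually.of_forall fun θ => ?_)
    dsimp only
    rw [smul_comm]
  rw [← hψdef] at *
  rw [← hswap]
  apply Tendsto.congr' _ hDCT
  filter_upwards [self_mem_nhdsWithin] with ε hε
  exact (main ε hε).symm
end

section
/- Let ν be an even function, locally integrable on ℝ∖{0}, with θ²ν(θ) ∈ L¹(ℝ), and let φ : ℝ → ℂ be a C¹ function with Lipschitz derivative such that φ(0) = 0. Then ν·φ̌ ∈ L¹(ℝ), where φ̌(θ) = ½(φ(θ) + φ(−θ)) is the even part of φ, and lim_{ε→0⁺} ∫_{|θ|≥ε} ν(θ) φ(θ) dθ = ∫_ℝ ν(θ) φ̌(θ) dθ. -/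
open MeasureTheory Real Filter

/-- Extension of the finite part `fp(ν)` to `C^{1,1}` functions vanishing at the
origin: if `ν` is even, locally integrable away from the origin, with
`θ²ν ∈ L¹(ℝ)`, and `φ` is `C¹` with Lipschitz derivative and `φ(0) = 0`, then
`ν·φ̌ ∈ L¹(ℝ)` and `lim_{ε→0⁺} ∫_{|θ|≥ε} ν(θ)φ(θ) dθ = ∫_ℝ ν(θ)φ̌(θ) dθ`. -/
theorem finite_part_extension (ν : ℝ → ℝ)
    (hν_even : ∀ᵐ θ ∂(volume : Measure ℝ), ν (-θ) = ν θ)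
    (hν_loc : LocallyIntegrableOn ν ({(0:ℝ)}ᶜ))
    (hν_int : Integrable (fun θ : ℝ => θ ^ 2 * ν θ))
    (φ : ℝ → ℂ) (hφ : ContDiff ℝ 1 φ)
    (K : NNReal) (hK : LipschitzWith K (deriv φ)) (hφ0 : φ 0 = 0) :
    Integrable (fun θ : ℝ => ν θ • ((φ θ + φ (-θ)) / 2)) ∧
    Tendsto (fun ε : ℝ => ∫ θ in {θ : ℝ | ε ≤ |θ|}, ν θ • φ θ)
      (nhdsWithin 0 (Set.Ioi 0))
      (nhds (∫ θ : ℝ, ν θ • ((φ θ + φ (-θ)) / 2))) := by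
  have hφd : Differentiable ℝ φ := hφ.differentiable one_ne_zero
  -- measurability of ν
  have hres : (volume : Measure ℝ).restrict ({(0:ℝ)}ᶜ) = volume := by
    rw [Measure.restrict_congr_set (t := Set.univ) (by
      rw [MeasureTheory.ae_eq_univ, compl_compl]; exact measure_singleton 0),
      Measure.restrict_univ]
  have hνm : AEStronglyMeasurable ν volume := by
    have := hν_loc.aestronglyMeasurable
    rwa [hres] at this
  -- helper: |x| ≤ |θ| on uIcc 0 θ
  have habs : ∀ θ x : ℝ, x ∈ Set.uIcc 0 θ → |x| ≤ |θ| := by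
    intro θ x hx
    have h1 := abs_le_max_abs_abs hx.1 hx.2
    rcases le_total 0 θ with h | h
    · rw [min_eq_left h, max_eq_right h] at h1; simpa using h1
    · rw [min_eq_right h, max_eq_left h] at h1; simpa using h1
  -- bound on the even part : ‖φ θ + φ (-θ)‖ ≤ 2 K θ²
  have key : ∀ θ : ℝ, ‖φ θ + φ (-θ)‖ ≤ 2 * K * θ ^ 2 := by
    intro θ
    set ψ : ℝ → ℂ := fun t => φ t + φ (-t) with hψdef
    have hψd : ∀ t : ℝ, HasDerivAt ψ (deriv φ t - deriv φ (-t)) t := by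
      intro t
      have h2 : HasDerivAt (fun t : ℝ => φ (-t)) (-(deriv φ (-t))) t := by
        have := HasDerivAt.scomp t ((hφd (-t)).hasDerivAt) (hasDerivAt_neg t)
        simpa [Function.comp_def] using this
      have := ((hφd t).hasDerivAt).add h2
      rw [sub_eq_add_neg]; exact this
    have bound : ∀ x ∈ Set.uIcc 0 θ, ‖deriv ψ x‖ ≤ (2 * K * |θ|) := by
      intro x hx
      rw [(hψd x).deriv]
      have h1 : ‖deriv φ x - deriv φ (-x)‖ ≤ K * ‖x - (-x)‖ := by
        have := hK.dist_le_mul x (-x)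
        rwa [dist_eq_norm, dist_eq_norm] at this
      have h2 : ‖x - (-x)‖ = 2 * |x| := by
        rw [sub_neg_eq_add, ← two_mul, Real.norm_eq_abs, abs_mul]
        norm_num
      have h3 := habs θ x hx
      have hKnn : (0:ℝ) ≤ K := K.coe_nonneg
      calc ‖deriv φ x - deriv φ (-x)‖ ≤ K * (2 * |x|) := by rw [← h2]; exact h1
        _ ≤ 2 * K * |θ| := by nlinarith
    have := Convex.norm_image_sub_le_of_norm_deriv_le
      (fun x _ => (hψd x).differentiableAt) bound (convex_uIcc 0 θ)
      (Set.left_mem_uIcc) (Set.right_mem_uIcc)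
    have hψ0 : ψ 0 = 0 := by simp [hψdef, hφ0]
    rw [hψ0, sub_zero, sub_zero, Real.norm_eq_abs] at this
    calc ‖ψ θ‖ ≤ 2 * K * |θ| * |θ| := this
      _ = 2 * K * θ ^ 2 := by rw [mul_assoc, abs_mul_abs_self, sq]
  -- global bound on φ : ‖φ t‖ ≤ ‖deriv φ 0‖ |t| + K t²
  have hφbound : ∀ t : ℝ, ‖φ t‖ ≤ ‖deriv φ 0‖ * |t| + K * t ^ 2 := by
    intro t
    have bound : ∀ x ∈ Set.uIcc 0 t, ‖deriv φ x‖ ≤ ‖deriv φ 0‖ + K * |t| := by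
      intro x hx
      have h1 : ‖deriv φ x - deriv φ 0‖ ≤ K * ‖x - 0‖ := by
        have := hK.dist_le_mul x 0
        rwa [dist_eq_norm, dist_eq_norm] at this
      rw [sub_zero, Real.norm_eq_abs] at h1
      have h3 := habs t x hx
      have hKnn : (0:ℝ) ≤ K := K.coe_nonneg
      have := norm_sub_norm_le (deriv φ x) (deriv φ 0)
      nlinarith
    have := Convex.norm_image_sub_le_of_norm_deriv_le
      (fun x _ => hφd x) bound (convex_uIcc 0 t)
      (Set.left_mem_uIcc) (Set.right_mem_uIcc)
    rw [hφ0, sub_zero, sub_zero, Real.norm_eq_abs] at this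
    calc ‖φ t‖ ≤ (‖deriv φ 0‖ + K * |t|) * |t| := this
      _ = ‖deriv φ 0‖ * |t| + K * t ^ 2 := by
          rw [add_mul, mul_assoc, abs_mul_abs_self, sq]
  -- Part 1 : integrability of ν • φ̌
  have hφc : Continuous φ := hφ.continuous
  have hgm : AEStronglyMeasurable (fun θ : ℝ => ν θ • ((φ θ + φ (-θ)) / 2)) volume :=
    hνm.smul (((hφc.add (hφc.comp continuous_neg)).div_const 2).aestronglyMeasurable)
  have hg : Integrable (fun θ : ℝ => ν θ • ((φ θ + φ (-θ)) / 2)) := by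
    refine (hν_int.const_mul (K : ℝ)).mono hgm (Eventually.of_forall fun θ => ?_)
    rw [norm_smul, Real.norm_eq_abs]
    have h2 : ‖(φ θ + φ (-θ)) / 2‖ ≤ K * θ ^ 2 := by
      rw [norm_div]
      have : ‖(2:ℂ)‖ = 2 := by norm_num
      rw [this]
      linarith [key θ]
    have hKnn : (0:ℝ) ≤ K := K.coe_nonneg
    have hn : ‖(K:ℝ) * (θ ^ 2 * ν θ)‖ = K * (θ ^ 2 * |ν θ|) := by
      rw [Real.norm_eq_abs, abs_mul, abs_mul, abs_of_nonneg hKnn, abs_pow, sq_abs]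
    rw [hn]
    have := abs_nonneg (ν θ)
    nlinarith [norm_nonneg ((φ θ + φ (-θ)) / 2)]
  refine ⟨hg, ?_⟩
  -- measurability of the sets
  have hSmeas : ∀ ε : ℝ, MeasurableSet {θ : ℝ | ε ≤ |θ|} := fun ε =>
    (isClosed_le continuous_const continuous_abs).measurableSet
  -- integrability of the odd part on {ε ≤ |θ|}
  have hoddm : AEStronglyMeasurable (fun θ : ℝ => ν θ • ((φ θ - φ (-θ)) / 2)) volume :=
    hνm.smul (((hφc.sub (hφc.comp continuous_neg)).div_const 2).aestronglyMeasurable)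
  have hoddint : ∀ ε : ℝ, 0 < ε →
      IntegrableOn (fun θ : ℝ => ν θ • ((φ θ - φ (-θ)) / 2)) {θ : ℝ | ε ≤ |θ|} := by
    intro ε hε
    refine ((hν_int.const_mul (‖deriv φ 0‖ / ε + K)).restrict).mono
      hoddm.restrict ?_
    rw [ae_restrict_iff' (hSmeas ε)]
    refine Eventually.of_forall fun θ hθ => ?_
    have hθ' : ε ≤ |θ| := hθ
    have habs2 : |θ| * |θ| = θ ^ 2 := by rw [abs_mul_abs_self, sq]
    have hKnn : (0:ℝ) ≤ K := K.coe_nonneg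
    have hd0 : (0:ℝ) ≤ ‖deriv φ 0‖ := norm_nonneg _
    rw [norm_smul, Real.norm_eq_abs]
    have h2 : ‖(φ θ - φ (-θ)) / 2‖ ≤ ‖deriv φ 0‖ * |θ| + K * θ ^ 2 := by
      rw [norm_div]
      have h2' : ‖(2:ℂ)‖ = 2 := by norm_num
      rw [h2']
      have := norm_sub_le (φ θ) (φ (-θ))
      have h3 := hφbound θ
      have h4 := hφbound (-θ)
      rw [abs_neg, neg_sq] at h4
      nlinarith
    have hn : ‖(‖deriv φ 0‖ / ε + K) * (θ ^ 2 * ν θ)‖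
        = (‖deriv φ 0‖ / ε + K) * (θ ^ 2 * |ν θ|) := by
      rw [Real.norm_eq_abs, abs_mul, abs_mul, abs_pow, sq_abs,
        abs_of_nonneg (by positivity : (0:ℝ) ≤ ‖deriv φ 0‖ / ε + K)]
    rw [hn]
    -- |θ| ≤ θ²/ε , i.e. ε |θ| ≤ θ²
    have h5 : ε * |θ| ≤ θ ^ 2 := by nlinarith [abs_nonneg θ]
    have h6 : ‖deriv φ 0‖ * |θ| ≤ ‖deriv φ 0‖ / ε * θ ^ 2 := by
      rw [div_mul_eq_mul_div, le_div_iff₀ hε]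
      nlinarith
    have := abs_nonneg (ν θ)
    nlinarith [norm_nonneg ((φ θ - φ (-θ)) / 2), sq_nonneg θ]
  -- the integral of the odd part vanishes on symmetric sets
  have hodd0 : ∀ ε : ℝ, 0 < ε →
      ∫ θ in {θ : ℝ | ε ≤ |θ|}, ν θ • ((φ θ - φ (-θ)) / 2) = 0 := by
    intro ε hε
    set F : ℝ → ℂ :=
      Set.indicator {θ : ℝ | ε ≤ |θ|} (fun θ => ν θ • ((φ θ - φ (-θ)) / 2)) with hFdef
    have h1 : ∫ θ in {θ : ℝ | ε ≤ |θ|}, ν θ • ((φ θ - φ (-θ)) / 2) = ∫ θ, F θ :=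
      (integral_indicator (hSmeas ε)).symm
    have h2 : (∫ θ : ℝ, F (-θ)) = ∫ θ, F θ := integral_neg_eq_self F volume
    have h3 : ∀ᵐ θ : ℝ, F (-θ) = -F θ := by
      filter_upwards [hν_even] with θ hθ
      by_cases h : θ ∈ {θ : ℝ | ε ≤ |θ|}
      · have h' : -θ ∈ {θ : ℝ | ε ≤ |θ|} := by
          simpa [Set.mem_setOf_eq, abs_neg] using h
        rw [hFdef]
        simp only [Set.indicator_of_mem h, Set.indicator_of_mem h', neg_neg]
        rw [hθ, ← smul_neg]
        congr 1
        ring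
      · have h' : -θ ∉ {θ : ℝ | ε ≤ |θ|} := by
          simpa [Set.mem_setOf_eq, abs_neg] using h
        rw [hFdef]
        simp [Set.indicator_of_notMem h, Set.indicator_of_notMem h']
    have h4 : (∫ θ : ℝ, F (-θ)) = -∫ θ, F θ := by
      rw [integral_congr_ae h3, integral_neg]
    rw [h1]
    have h5 : (∫ θ : ℝ, F θ) = -∫ θ, F θ := h2.symm.trans h4
    linear_combination h5 / 2
  -- eventual equality of the truncated integrals
  have heq : ∀ᶠ ε in nhdsWithin (0:ℝ) (Set.Ioi 0),
      (∫ θ in {θ : ℝ | ε ≤ |θ|}, ν θ • φ θ)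
        = ∫ θ in {θ : ℝ | ε ≤ |θ|}, ν θ • ((φ θ + φ (-θ)) / 2) := by
    filter_upwards [self_mem_nhdsWithin] with ε hε
    have hε' : (0:ℝ) < ε := hε
    have hpt : ∀ θ : ℝ, ν θ • φ θ
        = ν θ • ((φ θ + φ (-θ)) / 2) + ν θ • ((φ θ - φ (-θ)) / 2) := by
      intro θ
      rw [← smul_add]
      congr 1
      ring
    calc (∫ θ in {θ : ℝ | ε ≤ |θ|}, ν θ • φ θ)
        = ∫ θ in {θ : ℝ | ε ≤ |θ|},
            (ν θ • ((φ θ + φ (-θ)) / 2) + ν θ • ((φ θ - φ (-θ)) / 2)) := by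
          exact integral_congr_ae (Eventually.of_forall fun θ => hpt θ)
      _ = (∫ θ in {θ : ℝ | ε ≤ |θ|}, ν θ • ((φ θ + φ (-θ)) / 2))
            + ∫ θ in {θ : ℝ | ε ≤ |θ|}, ν θ • ((φ θ - φ (-θ)) / 2) :=
          integral_add hg.integrableOn (hoddint ε hε')
      _ = ∫ θ in {θ : ℝ | ε ≤ |θ|}, ν θ • ((φ θ + φ (-θ)) / 2) := by
          rw [hodd0 ε hε', add_zero]
  -- the complement is a ball
  have hcompl : ∀ ε : ℝ, ({θ : ℝ | ε ≤ |θ|})ᶜ = Metric.ball (0:ℝ) ε := by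
    intro ε
    ext θ
    simp [Metric.mem_ball, Real.dist_eq, not_le]
  -- the integral over the ball tends to 0
  have hball : Tendsto (fun ε : ℝ => ∫ θ in ({θ : ℝ | ε ≤ |θ|})ᶜ,
      ν θ • ((φ θ + φ (-θ)) / 2)) (nhdsWithin 0 (Set.Ioi 0)) (nhds 0) := by
    refine hg.tendsto_setIntegral_nhds_zero ?_
    have : (fun ε : ℝ => volume (({θ : ℝ | ε ≤ |θ|})ᶜ))
        = fun ε : ℝ => ENNReal.ofReal (2 * ε) := by
      funext ε
      rw [hcompl ε, Real.volume_ball]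
    show Tendsto ((volume : Measure ℝ) ∘ fun ε => ({θ : ℝ | ε ≤ |θ|})ᶜ)
      (nhdsWithin 0 (Set.Ioi 0)) (nhds 0)
    have h1 : Tendsto (fun ε : ℝ => ENNReal.ofReal (2 * ε))
        (nhdsWithin 0 (Set.Ioi 0)) (nhds 0) := by
      have h2 : Tendsto (fun ε : ℝ => 2 * ε) (nhdsWithin 0 (Set.Ioi 0)) (nhds 0) := by
        have h2' : Tendsto (fun ε : ℝ => 2 * ε) (nhds 0) (nhds (2 * 0)) :=
          tendsto_id.const_mul 2
        simpa using h2'.mono_left nhdsWithin_le_nhds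
      have := (ENNReal.continuous_ofReal.tendsto 0).comp h2
      simpa using (by exact this : Tendsto (fun ε : ℝ => ENNReal.ofReal (2 * ε)) _ (nhds (ENNReal.ofReal 0)))
    rw [show ((volume : Measure ℝ) ∘ fun ε => ({θ : ℝ | ε ≤ |θ|})ᶜ)
      = fun ε : ℝ => ENNReal.ofReal (2 * ε) from this]
    exact h1
  -- conclude
  have hdecomp : ∀ ε : ℝ, (∫ θ in {θ : ℝ | ε ≤ |θ|}, ν θ • ((φ θ + φ (-θ)) / 2))
      = (∫ θ : ℝ, ν θ • ((φ θ + φ (-θ)) / 2))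
        - ∫ θ in ({θ : ℝ | ε ≤ |θ|})ᶜ, ν θ • ((φ θ + φ (-θ)) / 2) := by
    intro ε
    have := integral_add_compl (hSmeas ε) hg
    rw [← this]
    ring
  have hmain : Tendsto (fun ε : ℝ => ∫ θ in {θ : ℝ | ε ≤ |θ|},
      ν θ • ((φ θ + φ (-θ)) / 2)) (nhdsWithin 0 (Set.Ioi 0))
      (nhds (∫ θ : ℝ, ν θ • ((φ θ + φ (-θ)) / 2))) := by
    simp_rw [hdecomp]
    have := (tendsto_const_nhds (x := ∫ θ : ℝ,
      ν θ • ((φ θ + φ (-θ)) / 2)) (f := nhdsWithin (0:ℝ) (Set.Ioi 0))).sub hball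
    simpa using this
  exact hmain.congr' (heq.mono fun ε h => h.symm)
end
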